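/- arXiv:1501.06642 — 6 statements merged into one kernel-verified Lean document; each statement's English description precedes it below -/
import Mathlib

section
/- Let c, d be coprime positive integers and m, n positive integers with 0 < ⌊n/d⌋ ≤ ⌊m/c⌋, and let n̄ = n mod d. Then the total number of nonempty lines of slope d/c through lattice points of the m×n board equals 2cd(⌊n/d⌋ - 1) + (d - n̄)(m - c⌊n/d⌋) + c(n̄ + d) + n̄(m - c⌊n/d⌋). -/
/-- The `m × n` board as a finite set of lattice points. -/
noncomputable def board (m n : ℕ) : Finset (ℤ × ℤ) := Finset.Icc (1 : ℤ) m ×ˢ Finset.Icc (1 : ℤ) n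

/-- Lemma 2.1 (total count): the number of nonempty lines of slope `d/c`
meeting the `m × n` board. Two points lie on a common line of slope `d/c`
(with `gcd(c,d) = 1`) iff they have the same value of `d*x - c*y`, so the
lines correspond to the image of the board under this invariant. -/
theorem number_of_lines (c d m n : ℕ) (hc : 0 < c) (hd : 0 < d) (hm : 0 < m) (hn : 0 < n)
    (hcd : Nat.Coprime c d) (h1 : 0 < n / d) (h2 : n / d ≤ m / c) :
    ((board m n).image (fun p => (d : ℤ) * p.1 - (c : ℤ) * p.2)).card
      = 2 * c * d * (n / d - 1)
        + ((d - n % d) * (m - c * (n / d)) + c * (n % d + d))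
        + (n % d) * (m - c * (n / d)) := by
  have hdn : d ≤ n := (Nat.one_le_div_iff hd).mp h1
  have hcq : c * (n / d) ≤ m := le_trans (Nat.mul_le_mul_left c h2) (Nat.mul_div_le m c)
  have hcm : c ≤ m := le_trans (by simpa using Nat.mul_le_mul_left c h1) hcq
  have hc' : (0:ℤ) < c := by exact_mod_cast hc
  have hd' : (0:ℤ) < d := by exact_mod_cast hd
  set f : ℤ × ℤ → ℤ := fun p => (d : ℤ) * p.1 - (c : ℤ) * p.2 with hf
  set S : Finset (ℤ × ℤ) := (board m n).filter (fun p => p.1 ≤ (c:ℤ) ∨ p.2 ≤ (d:ℤ)) with hS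
  -- the image over the whole board equals the image over the "minimal points" S
  have himg : (board m n).image f = S.image f := by
    apply Finset.Subset.antisymm
    · intro v hv
      simp only [Finset.mem_image] at hv ⊢
      obtain ⟨⟨x, y⟩, hmem, hfx⟩ := hv
      simp only [board, Finset.mem_product, Finset.mem_Icc] at hmem
      obtain ⟨⟨hx1, hxm⟩, hy1, hyn⟩ := hmem
      set t : ℤ := min ((x - 1) / c) ((y - 1) / d) with ht
      have ht0 : 0 ≤ t :=
        le_min (Int.ediv_nonneg (by omega) hc'.le) (Int.ediv_nonneg (by omega) hd'.le)
      have htx : t * c ≤ x - 1 :=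
        le_trans (mul_le_mul_of_nonneg_right (min_le_left _ _) hc'.le)
          (Int.ediv_mul_le _ (by omega))
      have hty : t * d ≤ y - 1 :=
        le_trans (mul_le_mul_of_nonneg_right (min_le_right _ _) hd'.le)
          (Int.ediv_mul_le _ (by omega))
      have htc : 0 ≤ t * c := mul_nonneg ht0 hc'.le
      have htd : 0 ≤ t * d := mul_nonneg ht0 hd'.le
      refine ⟨(x - t * c, y - t * d), ?_, by rw [← hfx]; simp only [hf]; ring⟩
      simp only [hS, board, Finset.mem_filter, Finset.mem_product, Finset.mem_Icc]
      refine ⟨⟨⟨by omega, by omega⟩, by omega, by omega⟩, ?_⟩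
      rcases min_cases ((x - 1) / c) ((y - 1) / d) with ⟨heq, _⟩ | ⟨heq, _⟩
      · left
        have h3 := Int.lt_ediv_add_one_mul_self (x - 1) hc'
        rw [← heq, ← ht] at h3
        linarith [h3, mul_comm t (c:ℤ)]
      · right
        have h3 := Int.lt_ediv_add_one_mul_self (y - 1) hd'
        rw [← heq, ← ht] at h3
        linarith [h3, mul_comm t (d:ℤ)]
    · exact Finset.image_subset_image (Finset.filter_subset _ _)
  -- the invariant is injective on S
  have hinj : Set.InjOn f S := by
    intro p hp q hq hpq
    simp only [hS, Finset.coe_filter, Set.mem_setOf_eq, board, Finset.mem_product,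
      Finset.mem_Icc] at hp hq
    obtain ⟨⟨⟨hp1, hpm⟩, hp2, hpn⟩, hpS⟩ := hp
    obtain ⟨⟨⟨hq1, hqm⟩, hq2, hqn⟩, hqS⟩ := hq
    simp only [hf] at hpq
    have heq : (d:ℤ) * (q.1 - p.1) = c * (q.2 - p.2) := by linear_combination -hpq
    have hco : IsCoprime (c:ℤ) (d:ℤ) := Nat.isCoprime_iff_coprime.mpr hcd
    have hdvd : (c:ℤ) ∣ (q.1 - p.1) := by
      refine hco.dvd_of_dvd_mul_right ⟨q.2 - p.2, ?_⟩
      linarith [heq]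
    obtain ⟨t, htA⟩ := hdvd
    have hB : q.2 - p.2 = t * d := by
      have : (c:ℤ) * (q.2 - p.2) = c * (t * d) := by rw [← heq, htA]; ring
      exact mul_left_cancel₀ (by positivity) this
    rcases lt_trichotomy t 0 with htn | htz | htp
    · have h1t : t ≤ -1 := by omega
      have hx : q.1 - p.1 ≤ -c := by
        have h := mul_le_mul_of_nonneg_right h1t hc'.le
        rw [htA, mul_comm]; linarith
      have hy : q.2 - p.2 ≤ -d := by
        have h := mul_le_mul_of_nonneg_right h1t hd'.le
        rw [hB]; linarith
      rcases hpS with h | h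
      · omega
      · omega
    · have hx : q.1 = p.1 := by rw [htz, mul_zero] at htA; omega
      have hy : q.2 = p.2 := by rw [htz, zero_mul] at hB; omega
      exact Prod.ext hx.symm hy.symm
    · have h1t : 1 ≤ t := by omega
      have hx : (c:ℤ) ≤ q.1 - p.1 := by
        have h := mul_le_mul_of_nonneg_right h1t hc'.le
        rw [htA, mul_comm]; linarith
      have hy : (d:ℤ) ≤ q.2 - p.2 := by
        have h := mul_le_mul_of_nonneg_right h1t hd'.le
        rw [hB]; linarith
      rcases hqS with h | h
      · omega
      · omega
  -- cardinality of S
  have hScard : S.card = m * n - (m - c) * (n - d) := by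
    have hSeq : S = board m n \ (Finset.Icc ((c:ℤ)+1) m ×ˢ Finset.Icc ((d:ℤ)+1) n) := by
      ext p
      simp only [hS, board, Finset.mem_filter, Finset.mem_sdiff, Finset.mem_product,
        Finset.mem_Icc, not_and, not_le]
      constructor
      · rintro ⟨⟨⟨h1, h2⟩, h3, h4⟩, h5⟩
        refine ⟨⟨⟨h1, h2⟩, h3, h4⟩, ?_⟩
        intro hcon
        omega
      · rintro ⟨⟨⟨h1, h2⟩, h3, h4⟩, h5⟩
        refine ⟨⟨⟨h1, h2⟩, h3, h4⟩, ?_⟩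
        by_contra hcon
        push_neg at hcon
        obtain ⟨ha, hb⟩ := hcon
        have := h5 ⟨by omega, by omega⟩
        omega
    have hTsub : (Finset.Icc ((c:ℤ)+1) m ×ˢ Finset.Icc ((d:ℤ)+1) n) ⊆ board m n := by
      intro p hp
      simp only [board, Finset.mem_product, Finset.mem_Icc] at *
      omega
    rw [hSeq, Finset.card_sdiff_of_subset hTsub]
    simp only [board, Finset.card_product, Int.card_Icc]
    have e1 : ((m:ℤ) + 1 - 1).toNat = m := by omega
    have e2 : ((n:ℤ) + 1 - 1).toNat = n := by omega
    have e3 : ((m:ℤ) + 1 - ((c:ℤ) + 1)).toNat = m - c := by omega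
    have e4 : ((n:ℤ) + 1 - ((d:ℤ) + 1)).toNat = n - d := by omega
    rw [e1, e2, e3, e4]
  rw [himg, Finset.card_image_of_injOn hinj, hScard]
  -- final arithmetic
  have hsub : (m - c) * (n - d) ≤ m * n := Nat.mul_le_mul (Nat.sub_le _ _) (Nat.sub_le _ _)
  have hr : n % d ≤ d := (Nat.mod_lt n hd).le
  set q : ℕ := n / d with hqdef
  set r : ℕ := n % d with hrdef
  have hqr : (n:ℤ) = d * q + r := by exact_mod_cast (Nat.div_add_mod n d).symm
  have h1' : 1 ≤ q := h1
  zify [hsub, hcm, hdn, hcq, hr, h1']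
  linear_combination (c:ℤ) * hqr
end

section
/- Let c, d be coprime positive integers and m, n positive integers with 0 < ⌊n/d⌋ ≤ ⌊m/c⌋, and n̄ = n mod d. Define α(3) = 2cd·Σ_{l=1}^{⌊n/d⌋-1} l³ + ((d-n̄)(m-c⌊n/d⌋)+c(n̄+d))·⌊n/d⌋³ + n̄(m-c⌊n/d⌋)·(⌊n/d⌋+1)³. Then α(3) = (2dmn³ - cn⁴)/(2d³) + cn²/(2d) + (n̄(d-n̄)/d³)·((3n+d-2n̄)dm - (3n+2d-4n̄)cn + 3cn̄(d-n̄)/2). -/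
lemma sum_cube_Icc (k : ℕ) :
    (∑ l ∈ Finset.Icc 1 k, (l : ℚ) ^ 3) = (k : ℚ) ^ 2 * ((k : ℚ) + 1) ^ 2 / 4 := by
  induction k with
  | zero => simp
  | succ k ih =>
    rw [Finset.sum_Icc_succ_top (by omega)]
    push_cast
    rw [ih]
    ring

/-- The closed form for the third power sum `α^{d/c}(3; m, n)` of the multiset
of line sizes on the `m × n` board. -/
theorem alpha_three_closed_form (c d m n t r : ℕ) (hc : 0 < c) (hd : 0 < d) (hm : 0 < m)
    (hn : 0 < n) (hcd : Nat.Coprime c d) (ht : t = n / d) (hr : r = n % d)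
    (h1 : 0 < n / d) (h2 : n / d ≤ m / c) :
    2 * (c : ℚ) * d * (∑ l ∈ Finset.Icc 1 (t - 1), (l : ℚ) ^ 3)
      + (((d : ℚ) - r) * ((m : ℚ) - c * t) + c * ((r : ℚ) + d)) * (t : ℚ) ^ 3
      + (r : ℚ) * ((m : ℚ) - c * t) * ((t : ℚ) + 1) ^ 3
    = (2 * (d : ℚ) * m * n ^ 3 - c * n ^ 4) / (2 * d ^ 3) + c * n ^ 2 / (2 * d)
      + ((r : ℚ) * ((d : ℚ) - r) / d ^ 3)
        * ((3 * (n : ℚ) + d - 2 * r) * d * m - (3 * (n : ℚ) + 2 * d - 4 * r) * c * n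
            + 3 * c * r * ((d : ℚ) - r) / 2) := by
  have ht1 : 1 ≤ t := by omega
  have hnq : (n : ℚ) = d * t + r := by
    subst ht hr
    have h : n = d * (n / d) + n % d := (Nat.div_add_mod n d).symm
    exact_mod_cast h
  have hcast : ((t - 1 : ℕ) : ℚ) = (t : ℚ) - 1 := by
    push_cast [ht1]; ring
  rw [sum_cube_Icc, hcast, hnq]
  have hd0 : (d : ℚ) ≠ 0 := by positivity
  field_simp
  ring
end

section
/- Let L be a finite multiset of natural numbers and q a positive integer. Then the q-th elementary symmetric function of L, i.e., the sum over all q-element sub-multisets {l₁,…,l_q} of L (chosen without repetition of positions) of the product l₁⋯l_q, equals the sum over all partitions λ of q, where λ has distinct parts λ₁,…,λ_k with multiplicities n₁,…,n_k, of (-1)^{q - Σnᵢ} · Π_{i=1}^{k} (1/(λᵢ^{nᵢ} nᵢ!)) · (Σ_{l∈L} l^{λᵢ})^{nᵢ}. -/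
open Finset Multiset

namespace NewtonAux

/-- power sum -/
noncomputable def P (L : Multiset ℕ) (k : ℕ) : ℚ := (L.map (fun l => (l : ℚ) ^ k)).sum

/-- weight of a partition multiset -/
noncomputable def W (L : Multiset ℕ) (m : Multiset ℕ) : ℚ :=
  (-1 : ℚ) ^ (m.sum - Multiset.card m) *
    ∏ a ∈ m.toFinset,
      (1 / ((a : ℚ) ^ (m.count a) * (Nat.factorial (m.count a) : ℚ))) * (P L a) ^ (m.count a)

noncomputable def S (L : Multiset ℕ) (n : ℕ) : ℚ := ∑ π : Nat.Partition n, W L π.parts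

lemma F_succ (L : Multiset ℕ) (i n : ℕ) (hi : 0 < i) :
    (i : ℚ) * ((n : ℚ) + 1) *
        ((1 / ((i : ℚ) ^ (n + 1) * (Nat.factorial (n + 1) : ℚ))) * (P L i) ^ (n + 1))
      = P L i * ((1 / ((i : ℚ) ^ n * (Nat.factorial n : ℚ))) * (P L i) ^ n) := by
  have h1 : (i : ℚ) ≠ 0 := Nat.cast_ne_zero.2 hi.ne'
  have h2 : ((Nat.factorial n : ℚ)) ≠ 0 := Nat.cast_ne_zero.2 (Nat.factorial_ne_zero n)
  rw [pow_succ, Nat.factorial_succ, pow_succ]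
  push_cast
  field_simp

lemma W_cons (L : Multiset ℕ) (i : ℕ) (hi : 0 < i) (m : Multiset ℕ) (hm : ∀ x ∈ m, 0 < x) :
    (i : ℚ) * ((m.count i : ℚ) + 1) * W L (i ::ₘ m)
      = (-1 : ℚ) ^ (i - 1) * P L i * W L m := by
  classical
  have hcard : Multiset.card m ≤ m.sum := by
    simpa using Multiset.card_nsmul_le_sum (fun x hx => hm x hx)
  have hsign : (i ::ₘ m).sum - Multiset.card (i ::ₘ m) = (i - 1) + (m.sum - Multiset.card m) := by
    simp only [Multiset.sum_cons, Multiset.card_cons]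
    omega
  set F : ℕ → ℕ → ℚ := fun a n =>
    (1 / ((a : ℚ) ^ n * (Nat.factorial n : ℚ))) * (P L a) ^ n with hF
  have key : (i : ℚ) * ((m.count i : ℚ) + 1) *
      ∏ a ∈ (i ::ₘ m).toFinset, F a ((i ::ₘ m).count a)
      = P L i * ∏ a ∈ m.toFinset, F a (m.count a) := by
    by_cases hmem : i ∈ m
    · have hfin : i ∈ m.toFinset := Multiset.mem_toFinset.2 hmem
      have htf : (i ::ₘ m).toFinset = m.toFinset := by
        rw [Multiset.toFinset_cons, Finset.insert_eq_self.2 hfin]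
      rw [htf, ← Finset.mul_prod_erase _ _ hfin, ← Finset.mul_prod_erase _ _ hfin]
      have hprod : ∏ a ∈ m.toFinset.erase i, F a ((i ::ₘ m).count a)
          = ∏ a ∈ m.toFinset.erase i, F a (m.count a) := by
        refine Finset.prod_congr rfl fun a ha => ?_
        rw [Multiset.count_cons_of_ne (Finset.ne_of_mem_erase ha)]
      rw [hprod, Multiset.count_cons_self]
      have h := F_succ L i (m.count i) hi
      simp only [hF]
      linear_combination (∏ a ∈ m.toFinset.erase i, F a (m.count a)) * h
    · have hfin : i ∉ m.toFinset := fun h => hmem (Multiset.mem_toFinset.1 h)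
      have hcnt : m.count i = 0 := Multiset.count_eq_zero.2 hmem
      rw [Multiset.toFinset_cons, Finset.prod_insert hfin]
      have hprod : ∏ a ∈ m.toFinset, F a ((i ::ₘ m).count a)
          = ∏ a ∈ m.toFinset, F a (m.count a) := by
        refine Finset.prod_congr rfl fun a ha => ?_
        rw [Multiset.count_cons_of_ne]
        intro h; exact hfin (h ▸ ha)
      rw [hprod, Multiset.count_cons_self, hcnt]
      have h1 : (i : ℚ) ≠ 0 := Nat.cast_ne_zero.2 hi.ne'
      have h : (i : ℚ) * ((0 : ℚ) + 1) *
          ((1 / ((i : ℚ) ^ (0 + 1) * (Nat.factorial (0 + 1) : ℚ))) * (P L i) ^ (0 + 1))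
          = P L i := by
        simp only [zero_add, pow_one, Nat.factorial_one, Nat.cast_one, mul_one]
        field_simp
      simp only [hF, Nat.cast_zero]
      linear_combination (∏ a ∈ m.toFinset, F a (m.count a)) * h
  unfold W
  rw [hsign, pow_add]
  calc (i : ℚ) * ((m.count i : ℚ) + 1) *
        ((-1:ℚ) ^ (i-1) * (-1:ℚ) ^ (m.sum - Multiset.card m) *
          ∏ a ∈ (i ::ₘ m).toFinset, F a ((i ::ₘ m).count a))
      = (-1:ℚ) ^ (i-1) * (-1:ℚ) ^ (m.sum - Multiset.card m) *
          ((i : ℚ) * ((m.count i : ℚ) + 1) *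
            ∏ a ∈ (i ::ₘ m).toFinset, F a ((i ::ₘ m).count a)) := by ring
    _ = (-1:ℚ) ^ (i-1) * P L i *
          ((-1:ℚ) ^ (m.sum - Multiset.card m) * ∏ a ∈ m.toFinset, F a (m.count a)) := by
        rw [key]; ring

end NewtonAux

namespace NewtonAux

lemma sum_parts_eq (m : Multiset ℕ) : ∑ i ∈ m.toFinset, m.count i * i = m.sum := by
  classical
  conv_rhs => rw [← Multiset.map_id m]
  rw [Finset.sum_multiset_map_count m id]
  simp [smul_eq_mul]

lemma rec_S (L : Multiset ℕ) (q : ℕ) (hq : 0 < q) :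
    (q : ℚ) * S L q = ∑ i ∈ Finset.Icc 1 q, (-1 : ℚ) ^ (i - 1) * P L i * S L (q - i) := by
  classical
  -- rewrite LHS
  have lhs : (q : ℚ) * S L q
      = ∑ π : Nat.Partition q, ∑ i ∈ π.parts.toFinset,
          ((i : ℚ) * (π.parts.count i : ℚ)) * W L π.parts := by
    rw [S, Finset.mul_sum]
    refine Finset.sum_congr rfl fun π _ => ?_
    rw [← Finset.sum_mul]
    congr 1
    have h := sum_parts_eq π.parts
    rw [π.parts_sum] at h
    push_cast [← h]
    exact Finset.sum_congr rfl fun i _ => by ring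
  have rhs : ∑ i ∈ Finset.Icc 1 q, (-1 : ℚ) ^ (i - 1) * P L i * S L (q - i)
      = ∑ i ∈ Finset.Icc 1 q, ∑ μ : Nat.Partition (q - i),
          (-1 : ℚ) ^ (i - 1) * P L i * W L μ.parts := by
    refine Finset.sum_congr rfl fun i _ => ?_
    rw [S, Finset.mul_sum]
  rw [lhs, rhs]
  rw [← Finset.sum_sigma (Finset.univ : Finset (Nat.Partition q)) (fun π => π.parts.toFinset)
      (fun x => ((x.2 : ℚ) * (x.1.parts.count x.2 : ℚ)) * W L x.1.parts),
    ← Finset.sum_sigma (Finset.Icc 1 q) (fun i => (Finset.univ : Finset (Nat.Partition (q - i))))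
      (fun x => (-1 : ℚ) ^ (x.1 - 1) * P L x.1 * W L x.2.parts)]
  refine Finset.sum_bij'
    (i := fun x hx => (⟨x.2, ⟨x.1.parts.erase x.2, ?_, ?_⟩⟩ :
        Σ i : ℕ, Nat.Partition (q - i)))
    (j := fun y hy => (⟨⟨y.1 ::ₘ y.2.parts, ?_, ?_⟩, y.1⟩ : Σ π : Nat.Partition q, ℕ))
    ?_ ?_ ?_ ?_ ?_
  · -- parts of erase are positive
    intro j hj
    exact x.1.parts_pos (Multiset.mem_of_mem_erase hj)
  · -- sum of erase
    simp only [Finset.mem_sigma, Finset.mem_univ, true_and] at hx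
    have hmem : x.2 ∈ x.1.parts := Multiset.mem_toFinset.1 hx
    have := Multiset.sum_erase hmem
    rw [x.1.parts_sum] at this
    omega
  · -- parts of cons are positive
    intro j hj
    simp only [Finset.mem_sigma, Finset.mem_Icc, Finset.mem_univ, and_true] at hy
    rcases Multiset.mem_cons.1 hj with rfl | h
    · omega
    · exact y.2.parts_pos h
  · -- sum of cons
    simp only [Finset.mem_sigma, Finset.mem_Icc, Finset.mem_univ, and_true] at hy
    rw [Multiset.sum_cons, y.2.parts_sum]
    omega
  · -- hi : image in Icc sigma
    rintro ⟨π, i⟩ hx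
    simp only [Finset.mem_sigma, Finset.mem_univ, true_and, Finset.mem_Icc, and_true] at hx ⊢
    have hmem : i ∈ π.parts := Multiset.mem_toFinset.1 hx
    exact ⟨π.parts_pos hmem, π.parts_sum ▸ Multiset.le_sum_of_mem hmem⟩
  · -- hj : image in univ sigma
    rintro ⟨i, μ⟩ hy
    simp only [Finset.mem_sigma, Finset.mem_univ, true_and]
    exact Multiset.mem_toFinset.2 (Multiset.mem_cons_self _ _)
  · -- left inverse
    rintro ⟨π, i⟩ hx
    simp only [Finset.mem_sigma, Finset.mem_univ, true_and] at hx
    have hmem : i ∈ π.parts := Multiset.mem_toFinset.1 hx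
    refine Sigma.ext ?_ ?_
    · ext1
      exact Multiset.cons_erase hmem
    · rfl
  · -- right inverse
    rintro ⟨i, μ⟩ hy
    refine Sigma.ext rfl ?_
    simp only [heq_eq_eq]
    ext1
    exact Multiset.erase_cons_head _ _
  · -- values
    rintro ⟨π, i⟩ hx
    simp only [Finset.mem_sigma, Finset.mem_univ, true_and] at hx
    have hmem : i ∈ π.parts := Multiset.mem_toFinset.1 hx
    have hpos : 0 < i := π.parts_pos hmem
    have hparts : ∀ x ∈ π.parts.erase i, 0 < x :=
      fun x hx' => π.parts_pos (Multiset.mem_of_mem_erase hx')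
    have h := W_cons L i hpos (π.parts.erase i) hparts
    rw [Multiset.cons_erase hmem] at h
    have hcpos : 0 < π.parts.count i := Multiset.count_pos.2 hmem
    have hcnt : (π.parts.erase i).count i + 1 = π.parts.count i := by
      rw [Multiset.count_erase_self]
      omega
    rw [← hcnt]
    push_cast
    linear_combination h
end NewtonAux

namespace NewtonAux

noncomputable def E (L : Multiset ℕ) (k : ℕ) : ℚ := (L.map (fun l => (l : ℚ))).esymm k

lemma rec_E (L : Multiset ℕ) (q : ℕ) (hq : 0 < q) :
    (q : ℚ) * E L q = ∑ i ∈ Finset.Icc 1 q, (-1 : ℚ) ^ (i - 1) * P L i * E L (q - i) := by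
  classical
  -- realize L as values of a function on Fin n
  set M : Multiset ℚ := L.map (fun l => (l : ℚ)) with hM
  obtain ⟨l, hl⟩ : ∃ l : List ℚ, (l : Multiset ℚ) = M := ⟨M.toList, M.coe_toList⟩
  set f : Fin l.length → ℚ := l.get with hf
  have huniv : (Finset.univ : Finset (Fin l.length)).val.map f = M := by
    rw [← hl]
    have : (Finset.univ : Finset (Fin l.length)).val = (List.finRange l.length : Multiset _) := rfl
    rw [this]
    exact congrArg _ (List.map_get_finRange l)
  have key := congrArg (MvPolynomial.aeval f) (MvPolynomial.mul_esymm_eq_sum (Fin l.length) ℚ q)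
  simp only [map_mul, map_natCast, map_pow, map_neg, map_one, map_sum,
    MvPolynomial.aeval_esymm_eq_multiset_esymm] at key
  have hpsum : ∀ k : ℕ, MvPolynomial.aeval f (MvPolynomial.psum (Fin l.length) ℚ k) = P L k := by
    intro k
    rw [MvPolynomial.psum]
    simp only [map_sum, map_pow, MvPolynomial.aeval_X]
    rw [P]
    have : (M.map (fun x => x ^ k)).sum = ∑ i : Fin l.length, f i ^ k := by
      rw [← huniv, Multiset.map_map]
      rfl
    rw [← this, hM, Multiset.map_map]
    rfl
  rw [huniv] at key
  simp only [hpsum] at key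
  rw [E, key]
  -- now reindex the antidiagonal sum
  rw [Finset.mul_sum]
  refine Finset.sum_bij' (i := fun a _ => a.2) (j := fun i _ => (q - i, i)) ?_ ?_ ?_ ?_ ?_
  · rintro ⟨a, b⟩ ha
    simp only [Finset.mem_filter, Finset.HasAntidiagonal.mem_antidiagonal] at ha
    simp only [Finset.mem_Icc]
    omega
  · intro i hi
    simp only [Finset.mem_Icc] at hi
    simp only [Finset.mem_filter, Finset.HasAntidiagonal.mem_antidiagonal]
    omega
  · rintro ⟨a, b⟩ ha
    simp only [Finset.mem_filter, Finset.HasAntidiagonal.mem_antidiagonal] at ha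
    simp only [Prod.mk.injEq]
    exact ⟨by omega, trivial⟩
  · intro i hi
    rfl
  · rintro ⟨a, b⟩ ha
    simp only [Finset.mem_filter, Finset.HasAntidiagonal.mem_antidiagonal] at ha
    have hsign : (-1 : ℚ) ^ (q + 1) * (-1 : ℚ) ^ a = (-1 : ℚ) ^ (b - 1) := by
      rw [← pow_add, show q + 1 + a = (b - 1) + 2 * (a + 1) by omega, pow_add, pow_mul]
      simp
    have hE : M.esymm a = E L (q - b) := by
      rw [hM, E]
      congr 1
      omega
    dsimp only
    rw [hE]
    linear_combination (E L (q - b) * P L b) * hsign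

end NewtonAux

namespace NewtonAux

lemma E_zero (L : Multiset ℕ) : E L 0 = 1 := by
  simp [E, Multiset.esymm, Multiset.powersetCard_zero_left]

lemma S_zero (L : Multiset ℕ) : S L 0 = 1 := by
  rw [S, Fintype.sum_unique]
  simp [W]

lemma E_eq_S (L : Multiset ℕ) : ∀ q, E L q = S L q := by
  intro q
  induction q using Nat.strong_induction_on with
  | _ q ih =>
    rcases Nat.eq_zero_or_pos q with rfl | hq
    · rw [E_zero, S_zero]
    · have h1 := rec_E L q hq
      have h2 := rec_S L q hq
      have h3 : ∑ i ∈ Finset.Icc 1 q, (-1 : ℚ) ^ (i - 1) * P L i * E L (q - i)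
          = ∑ i ∈ Finset.Icc 1 q, (-1 : ℚ) ^ (i - 1) * P L i * S L (q - i) := by
        refine Finset.sum_congr rfl fun i hi => ?_
        simp only [Finset.mem_Icc] at hi
        rw [ih (q - i) (by omega)]
      have hq' : (q : ℚ) ≠ 0 := Nat.cast_ne_zero.2 hq.ne'
      exact mul_left_cancel₀ hq' (by rw [h1, h3, ← h2])

end NewtonAux

/-- Newton's identity, as used in Proposition 3.1: the `q`-th elementary symmetric
function of a finite multiset `L` equals a signed sum over integer partitions of `q`
of products of power sums, weighted by the reciprocal of the centralizer order
`z(λ) = ∏ λᵢ^{nᵢ} nᵢ!`. -/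
theorem esymm_eq_sum_over_partitions (L : Multiset ℕ) (q : ℕ) (hq : 0 < q) :
    (L.map (fun l => (l : ℚ))).esymm q
      = ∑ π : Nat.Partition q,
          (-1 : ℚ) ^ (q - Multiset.card π.parts) *
            ∏ a ∈ π.parts.toFinset,
              (1 / ((a : ℚ) ^ (π.parts.count a) * (Nat.factorial (π.parts.count a) : ℚ))) *
                ((L.map (fun l => (l : ℚ) ^ a)).sum) ^ (π.parts.count a) := by
  have h := NewtonAux.E_eq_S L q
  rw [NewtonAux.E, NewtonAux.S] at h
  rw [h]
  refine Finset.sum_congr rfl fun π _ => ?_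
  rw [NewtonAux.W, π.parts_sum]
  rfl
end

section
/- Let c, d be coprime positive integers with c ≤ d, and fix a positive integer q. For n ≥ qd (so that the counts are given by the quasipolynomial formula), the number u(q; n) of nonattacking configurations of q one-move riders with move (c,d) on the n×n board is a quasipolynomial in n whose coefficients are periodic with period dividing d; explicitly, u(q;n) is given by Σ over partitions λ ⊢ q of ε(λ)/z(λ) · Π_i p_{λᵢ}(n), where each power sum p_λ(n) = Σ_{l ∈ L^{d/c}(n,n)} l^λ depends on n only through n and n mod d polynomially, hence u(q; n+d) and u(q; n) agree as polynomial expressions in n with the same residue n mod d. -/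
/-- The multiset `L^{d/c}(m,n)` of sizes of intersections of lines of slope `d/c`
with the `m × n` board: lines are the fibers of the invariant `p ↦ d·p₁ - c·p₂`. -/
noncomputable def lineSizes (c d m n : ℕ) : Multiset ℕ :=
  ((board m n).image (fun p => (d : ℤ) * p.1 - (c : ℤ) * p.2)).val.map
    (fun b => ((board m n).filter (fun p => (d : ℤ) * p.1 - (c : ℤ) * p.2 = b)).card)

open Finset

def lineInv (c d : ℕ) (p : ℤ × ℤ) : ℤ := (d : ℤ) * p.1 - (c : ℤ) * p.2

noncomputable def minPts (c d n : ℕ) : Finset (ℤ × ℤ) :=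
  (board n n).filter (fun p => p.1 ≤ (c:ℤ) ∨ p.2 ≤ (d:ℤ))

def fsize (c d n : ℕ) (p : ℤ × ℤ) : ℕ :=
  (min (((n:ℤ) - p.1) / c) (((n:ℤ) - p.2) / d)).toNat + 1

lemma mem_board {n : ℕ} {p : ℤ × ℤ} :
    p ∈ board n n ↔ (1 ≤ p.1 ∧ p.1 ≤ n) ∧ (1 ≤ p.2 ∧ p.2 ≤ n) := by
  simp [board, Finset.mem_product, Finset.mem_Icc]

lemma inv_step {c d : ℕ} (hc : 0 < c) (hcop : Nat.Coprime c d) {p q : ℤ × ℤ}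
    (h : lineInv c d p = lineInv c d q) :
    ∃ t : ℤ, q.1 = p.1 + c * t ∧ q.2 = p.2 + d * t := by
  have hco : IsCoprime (c:ℤ) (d:ℤ) := by
    rw [Int.isCoprime_iff_gcd_eq_one]
    simpa [Int.gcd] using hcop
  have h1 : (d:ℤ) * (q.1 - p.1) = (c:ℤ) * (q.2 - p.2) := by
    unfold lineInv at h; linarith
  have h2 : (c:ℤ) ∣ (q.1 - p.1) := by
    refine hco.dvd_of_dvd_mul_right ?_
    exact ⟨q.2 - p.2, by linarith⟩
  obtain ⟨t, ht⟩ := h2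
  have hc0 : (c:ℤ) ≠ 0 := by positivity
  refine ⟨t, by linarith, ?_⟩
  have h3 : (c:ℤ) * (q.2 - p.2) = (c:ℤ) * ((d:ℤ) * t) := by rw [← h1, ht]; ring
  have := mul_left_cancel₀ hc0 h3
  linarith

lemma minPts_injOn {c d n : ℕ} (hc : 0 < c) (hcd : c ≤ d) (hcop : Nat.Coprime c d) :
    Set.InjOn (lineInv c d) (minPts c d n : Set (ℤ × ℤ)) := by
  have hd : 0 < d := lt_of_lt_of_le hc hcd
  intro P hP Q hQ h
  obtain ⟨t, h1, h2⟩ := inv_step hc hcop h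
  simp only [minPts, Finset.coe_filter, Set.mem_setOf_eq, mem_board] at hP hQ
  obtain ⟨⟨⟨hP1, hP2⟩, hP3, hP4⟩, hPS⟩ := hP
  obtain ⟨⟨⟨hQ1, hQ2⟩, hQ3, hQ4⟩, hQS⟩ := hQ
  have hcZ : (0:ℤ) < c := by exact_mod_cast hc
  have hdZ : (0:ℤ) < d := by exact_mod_cast hd
  have ht : t = 0 := by
    rcases lt_trichotomy t 0 with ht | ht | ht
    · exfalso
      rcases hPS with hs | hs
      · nlinarith
      · nlinarith
    · exact ht
    · exfalso
      rcases hQS with hs | hs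
      · nlinarith
      · nlinarith
  subst ht
  have : Q.1 = P.1 ∧ Q.2 = P.2 := by constructor <;> linarith
  exact (Prod.ext this.1 this.2).symm

lemma exists_min {c d n : ℕ} (hc : 0 < c) (hcd : c ≤ d) {P : ℤ × ℤ}
    (hP : P ∈ board n n) :
    ∃ Q ∈ minPts c d n, lineInv c d Q = lineInv c d P := by
  have hd : 0 < d := lt_of_lt_of_le hc hcd
  have hcZ : (0:ℤ) < c := by exact_mod_cast hc
  have hdZ : (0:ℤ) < d := by exact_mod_cast hd
  rw [mem_board] at hP
  obtain ⟨⟨h1, h2⟩, h3, h4⟩ := hP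
  set t := min ((P.1 - 1)/(c:ℤ)) ((P.2 - 1)/(d:ℤ)) with htdef
  have ht0 : 0 ≤ t := le_min (Int.ediv_nonneg (by linarith) (le_of_lt hcZ))
    (Int.ediv_nonneg (by linarith) (le_of_lt hdZ))
  have hta : (c:ℤ) * t ≤ P.1 - 1 := by
    have := (Int.le_ediv_iff_mul_le hcZ).mp (min_le_left ((P.1 - 1)/(c:ℤ)) ((P.2 - 1)/(d:ℤ)))
    linarith
  have htb : (d:ℤ) * t ≤ P.2 - 1 := by
    have := (Int.le_ediv_iff_mul_le hdZ).mp (min_le_right ((P.1 - 1)/(c:ℤ)) ((P.2 - 1)/(d:ℤ)))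
    linarith
  refine ⟨(P.1 - c*t, P.2 - d*t), ?_, by unfold lineInv; ring⟩
  simp only [minPts, Finset.mem_filter, mem_board]
  refine ⟨⟨⟨by linarith, ?_⟩, by linarith, ?_⟩, ?_⟩
  · nlinarith
  · nlinarith
  · -- S condition
    rcases min_cases ((P.1 - 1)/(c:ℤ)) ((P.2 - 1)/(d:ℤ)) with ⟨heq, _⟩ | ⟨heq, _⟩
    · left
      have := Int.lt_ediv_add_one_mul_self (P.1 - 1) hcZ
      rw [← heq, ← htdef] at this
      show P.1 - (c:ℤ) * t ≤ (c:ℤ)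
      nlinarith
    · right
      have := Int.lt_ediv_add_one_mul_self (P.2 - 1) hdZ
      rw [← heq, ← htdef] at this
      show P.2 - (d:ℤ) * t ≤ (d:ℤ)
      nlinarith

lemma fiber_eq {c d n : ℕ} (hc : 0 < c) (hcd : c ≤ d) (hcop : Nat.Coprime c d) {P : ℤ × ℤ}
    (hP : P ∈ minPts c d n) :
    (board n n).filter (fun p => lineInv c d p = lineInv c d P)
      = (Finset.Icc (0:ℤ) (min (((n:ℤ) - P.1) / c) (((n:ℤ) - P.2) / d))).image
          (fun t => (P.1 + c*t, P.2 + d*t)) := by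
  have hd : 0 < d := lt_of_lt_of_le hc hcd
  have hcZ : (0:ℤ) < c := by exact_mod_cast hc
  have hdZ : (0:ℤ) < d := by exact_mod_cast hd
  simp only [minPts, Finset.mem_filter, mem_board] at hP
  obtain ⟨⟨⟨h1, h2⟩, h3, h4⟩, hS⟩ := hP
  ext Q
  simp only [Finset.mem_filter, Finset.mem_image, Finset.mem_Icc, mem_board]
  constructor
  · rintro ⟨⟨⟨g1, g2⟩, g3, g4⟩, hinv⟩
    obtain ⟨t, e1, e2⟩ := inv_step hc hcop hinv.symm
    refine ⟨t, ⟨?_, le_min ?_ ?_⟩, by rw [← e1, ← e2]⟩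
    · by_contra hlt
      push_neg at hlt
      rcases hS with hs | hs
      · nlinarith
      · nlinarith
    · rw [Int.le_ediv_iff_mul_le hcZ]; nlinarith
    · rw [Int.le_ediv_iff_mul_le hdZ]; nlinarith
  · rintro ⟨t, ⟨ht0, ht1⟩, rfl⟩
    have ha := (Int.le_ediv_iff_mul_le hcZ).mp (le_trans ht1 (min_le_left _ _))
    have hb := (Int.le_ediv_iff_mul_le hdZ).mp (le_trans ht1 (min_le_right _ _))
    refine ⟨⟨⟨?_, ?_⟩, ?_, ?_⟩, by unfold lineInv; ring⟩
    · show (1:ℤ) ≤ P.1 + (c:ℤ) * t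
      nlinarith
    · show P.1 + (c:ℤ) * t ≤ (n:ℤ)
      nlinarith
    · show (1:ℤ) ≤ P.2 + (d:ℤ) * t
      nlinarith
    · show P.2 + (d:ℤ) * t ≤ (n:ℤ)
      nlinarith

lemma fiber_card {c d n : ℕ} (hc : 0 < c) (hcd : c ≤ d) (hcop : Nat.Coprime c d) {P : ℤ × ℤ}
    (hP : P ∈ minPts c d n) :
    ((board n n).filter (fun p => lineInv c d p = lineInv c d P)).card = fsize c d n P := by
  have hcZ : (0:ℤ) < c := by exact_mod_cast hc
  have hdZ : (0:ℤ) < d := by exact_mod_cast lt_of_lt_of_le hc hcd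
  rw [fiber_eq hc hcd hcop hP]
  rw [Finset.card_image_of_injective _ (fun a b hab => by
    have : P.1 + (c:ℤ)*a = P.1 + (c:ℤ)*b := congrArg Prod.fst hab
    have := mul_left_cancel₀ (ne_of_gt hcZ) (by linarith : (c:ℤ)*a = (c:ℤ)*b)
    exact this)]
  have hmin0 : 0 ≤ min (((n:ℤ) - P.1) / c) (((n:ℤ) - P.2) / d) := by
    simp only [minPts, Finset.mem_filter, mem_board] at hP
    exact le_min (Int.ediv_nonneg (by linarith [hP.1.1.2]) (le_of_lt hcZ))
      (Int.ediv_nonneg (by linarith [hP.1.2.2]) (le_of_lt hdZ))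
  rw [Int.card_Icc]
  unfold fsize
  omega

lemma lineSizes_eq {c d n : ℕ} (hc : 0 < c) (hcd : c ≤ d) (hcop : Nat.Coprime c d) :
    lineSizes c d n n = (minPts c d n).val.map (fsize c d n) := by
  have himg : (board n n).image (lineInv c d) = (minPts c d n).image (lineInv c d) := by
    apply Finset.Subset.antisymm
    · intro b hb
      rw [Finset.mem_image] at hb ⊢
      obtain ⟨P, hP, rfl⟩ := hb
      obtain ⟨Q, hQ, hQP⟩ := exists_min hc hcd hP (c := c) (d := d)
      exact ⟨Q, hQ, hQP⟩
    · intro b hb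
      rw [Finset.mem_image] at hb ⊢
      obtain ⟨P, hP, rfl⟩ := hb
      exact ⟨P, Finset.mem_of_mem_filter P hP, rfl⟩
  have hval : ((minPts c d n).image (lineInv c d)).val = (minPts c d n).val.map (lineInv c d) := by
    rw [Finset.image_val, Multiset.dedup_eq_self.mpr]
    apply Multiset.Nodup.map_on
    · intro x hx y hy h
      exact minPts_injOn hc hcd hcop (by exact hx) (by exact hy) h
    · exact (minPts c d n).nodup
  have : lineSizes c d n n = ((board n n).image (lineInv c d)).val.map
      (fun b => ((board n n).filter (fun p => lineInv c d p = b)).card) := rfl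
  rw [this, himg, hval, Multiset.map_map]
  apply Multiset.map_congr rfl
  intro P hP
  exact fiber_card hc hcd hcop (by exact hP)

lemma le_fsize_iff {c d n l : ℕ} (hc : 0 < c) (hcd : c ≤ d) {P : ℤ × ℤ}
    (hP : P ∈ board n n) :
    l + 1 ≤ fsize c d n P ↔ P.1 ≤ (n:ℤ) - l*c ∧ P.2 ≤ (n:ℤ) - l*d := by
  have hcZ : (0:ℤ) < c := by exact_mod_cast hc
  have hdZ : (0:ℤ) < d := by exact_mod_cast lt_of_lt_of_le hc hcd
  rw [mem_board] at hP
  obtain ⟨⟨h1, h2⟩, h3, h4⟩ := hP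
  have hm0 : 0 ≤ min (((n:ℤ) - P.1) / c) (((n:ℤ) - P.2) / d) :=
    le_min (Int.ediv_nonneg (by linarith) hcZ.le) (Int.ediv_nonneg (by linarith) hdZ.le)
  unfold fsize
  rw [show l + 1 ≤ (min (((n:ℤ) - P.1) / c) (((n:ℤ) - P.2) / d)).toNat + 1 ↔
      (l:ℤ) ≤ min (((n:ℤ) - P.1) / c) (((n:ℤ) - P.2) / d) by omega]
  rw [le_min_iff, Int.le_ediv_iff_mul_le hcZ, Int.le_ediv_iff_mul_le hdZ]
  constructor
  · rintro ⟨ha, hb⟩; constructor <;> nlinarith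
  · rintro ⟨ha, hb⟩; constructor <;> nlinarith

lemma filter_ge_eq {c d n l : ℕ} (hc : 0 < c) (hcd : c ≤ d) :
    (minPts c d n).filter (fun P => l + 1 ≤ fsize c d n P)
      = ((Finset.Icc (1:ℤ) ((n:ℤ) - l*c)) ×ˢ (Finset.Icc (1:ℤ) ((n:ℤ) - l*d))).filter
          (fun P => P.1 ≤ (c:ℤ) ∨ P.2 ≤ (d:ℤ)) := by
  have hcZ : (0:ℤ) < c := by exact_mod_cast hc
  have hdZ : (0:ℤ) < d := by exact_mod_cast lt_of_lt_of_le hc hcd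
  have hlc : 0 ≤ (l:ℤ)*c := by positivity
  have hld : 0 ≤ (l:ℤ)*d := by positivity
  ext P
  simp only [minPts, Finset.mem_filter, mem_board, Finset.mem_product, Finset.mem_Icc]
  constructor
  · rintro ⟨⟨hb, hS⟩, hf⟩
    rw [le_fsize_iff hc hcd (mem_board.mpr hb)] at hf
    obtain ⟨⟨h1, h2⟩, h3, h4⟩ := hb
    exact ⟨⟨⟨h1, hf.1⟩, h3, hf.2⟩, hS⟩
  · rintro ⟨⟨⟨h1, h2⟩, h3, h4⟩, hS⟩
    have hb : (1 ≤ P.1 ∧ P.1 ≤ (n:ℤ)) ∧ 1 ≤ P.2 ∧ P.2 ≤ (n:ℤ) :=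
      ⟨⟨h1, by linarith⟩, h3, by linarith⟩
    exact ⟨⟨hb, hS⟩, (le_fsize_iff hc hcd (mem_board.mpr hb)).mpr ⟨h2, h4⟩⟩

lemma count_mid {c d n l : ℕ} (hc : 0 < c) (hcd : c ≤ d)
    (hX : (c:ℤ) ≤ (n:ℤ) - l*c) (hY : (d:ℤ) ≤ (n:ℤ) - l*d) :
    ((((Finset.Icc (1:ℤ) ((n:ℤ) - l*c)) ×ˢ (Finset.Icc (1:ℤ) ((n:ℤ) - l*d))).filter
        (fun P => P.1 ≤ (c:ℤ) ∨ P.2 ≤ (d:ℤ))).card : ℤ)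
      = c * ((n:ℤ) - l*d) + d * ((n:ℤ) - l*c) - c*d := by
  have hcZ : (0:ℤ) < c := by exact_mod_cast hc
  have hdZ : (0:ℤ) < d := by exact_mod_cast lt_of_lt_of_le hc hcd
  set X := (n:ℤ) - l*c with hXd
  set Y := (n:ℤ) - l*d with hYd
  have hA : ((Finset.Icc (1:ℤ) X) ×ˢ (Finset.Icc (1:ℤ) Y)).filter (fun P => P.1 ≤ (c:ℤ))
      = (Finset.Icc (1:ℤ) (c:ℤ)) ×ˢ (Finset.Icc (1:ℤ) Y) := by
    ext P
    simp only [Finset.mem_filter, Finset.mem_product, Finset.mem_Icc]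
    constructor
    · rintro ⟨⟨⟨a1, a2⟩, a3, a4⟩, a5⟩; exact ⟨⟨a1, a5⟩, a3, a4⟩
    · rintro ⟨⟨a1, a2⟩, a3, a4⟩; exact ⟨⟨⟨a1, by linarith⟩, a3, a4⟩, a2⟩
  have hB : ((Finset.Icc (1:ℤ) X) ×ˢ (Finset.Icc (1:ℤ) Y)).filter (fun P => P.2 ≤ (d:ℤ))
      = (Finset.Icc (1:ℤ) X) ×ˢ (Finset.Icc (1:ℤ) (d:ℤ)) := by
    ext P
    simp only [Finset.mem_filter, Finset.mem_product, Finset.mem_Icc]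
    constructor
    · rintro ⟨⟨⟨a1, a2⟩, a3, a4⟩, a5⟩; exact ⟨⟨a1, a2⟩, a3, a5⟩
    · rintro ⟨⟨a1, a2⟩, a3, a4⟩; exact ⟨⟨⟨a1, a2⟩, a3, by linarith⟩, a4⟩
  have hAB : (((Finset.Icc (1:ℤ) (c:ℤ)) ×ˢ (Finset.Icc (1:ℤ) Y)) ∩
      ((Finset.Icc (1:ℤ) X) ×ˢ (Finset.Icc (1:ℤ) (d:ℤ))))
      = (Finset.Icc (1:ℤ) (c:ℤ)) ×ˢ (Finset.Icc (1:ℤ) (d:ℤ)) := by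
    ext P
    simp only [Finset.mem_inter, Finset.mem_product, Finset.mem_Icc]
    constructor
    · rintro ⟨⟨⟨a1, a2⟩, a3, a4⟩, ⟨b1, b2⟩, b3, b4⟩; exact ⟨⟨a1, a2⟩, b3, b4⟩
    · rintro ⟨⟨a1, a2⟩, a3, a4⟩
      exact ⟨⟨⟨a1, a2⟩, a3, by linarith⟩, ⟨a1, by linarith⟩, a3, a4⟩
  rw [Finset.filter_or, hA, hB]
  have key := Finset.card_union_add_card_inter
    ((Finset.Icc (1:ℤ) (c:ℤ)) ×ˢ (Finset.Icc (1:ℤ) Y))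
    ((Finset.Icc (1:ℤ) X) ×ˢ (Finset.Icc (1:ℤ) (d:ℤ)))
  rw [hAB] at key
  have e1 : ((Finset.Icc (1:ℤ) (c:ℤ)) ×ˢ (Finset.Icc (1:ℤ) Y)).card = c * Y.toNat := by
    rw [Finset.card_product, Int.card_Icc, Int.card_Icc]
    congr 1 <;> omega
  have e2 : ((Finset.Icc (1:ℤ) X) ×ˢ (Finset.Icc (1:ℤ) (d:ℤ))).card = X.toNat * d := by
    rw [Finset.card_product, Int.card_Icc, Int.card_Icc]
    congr 1 <;> omega
  have e3 : ((Finset.Icc (1:ℤ) (c:ℤ)) ×ˢ (Finset.Icc (1:ℤ) (d:ℤ))).card = c * d := by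
    rw [Finset.card_product, Int.card_Icc, Int.card_Icc]
    congr 1 <;> omega
  rw [e1, e2, e3] at key
  have hXt : (X.toNat : ℤ) = X := Int.toNat_of_nonneg (by linarith)
  have hYt : (Y.toNat : ℤ) = Y := Int.toNat_of_nonneg (by linarith)
  have := congrArg (fun x : ℕ => (x : ℤ)) key
  push_cast at this
  rw [hXt, hYt] at this
  linarith

lemma count_top {c d n : ℕ} (hc : 0 < c) (hcd : c ≤ d) :
    ((((Finset.Icc (1:ℤ) ((n:ℤ) - (n/d)*c)) ×ˢ (Finset.Icc (1:ℤ) ((n:ℤ) - (n/d)*d))).filter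
        (fun P => P.1 ≤ (c:ℤ) ∨ P.2 ≤ (d:ℤ))).card : ℤ)
      = ((n:ℤ) - (n/d)*c) * ((n % d : ℕ) : ℤ) := by
  have hd : 0 < d := lt_of_lt_of_le hc hcd
  have hY : (n:ℤ) - (n/d)*d = ((n % d : ℕ) : ℤ) := by
    have h := Int.mul_ediv_add_emod (n:ℤ) (d:ℤ)
    push_cast
    linarith
  have hX0 : 0 ≤ (n:ℤ) - (n/d)*c := by
    have h1 : n/d*d ≤ n := Nat.div_mul_le_self n d
    have h2 : n/d*c ≤ n/d*d := Nat.mul_le_mul_left _ hcd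
    have : ((n/d*c : ℕ) : ℤ) ≤ (n:ℤ) := by exact_mod_cast le_trans h2 h1
    push_cast at this
    linarith
  have hfull : ((Finset.Icc (1:ℤ) ((n:ℤ) - (n/d)*c)) ×ˢ (Finset.Icc (1:ℤ) ((n:ℤ) - (n/d)*d))).filter
        (fun P => P.1 ≤ (c:ℤ) ∨ P.2 ≤ (d:ℤ))
      = (Finset.Icc (1:ℤ) ((n:ℤ) - (n/d)*c)) ×ˢ (Finset.Icc (1:ℤ) ((n:ℤ) - (n/d)*d)) := by
    apply Finset.filter_true_of_mem
    intro P hP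
    rw [Finset.mem_product, Finset.mem_Icc, Finset.mem_Icc] at hP
    right
    have hrd : ((n % d : ℕ) : ℤ) ≤ (d:ℤ) := by
      have := Nat.mod_lt n hd
      exact_mod_cast le_of_lt this
    rw [hY] at hP
    linarith [hP.2.2]
  rw [hfull, Finset.card_product, Int.card_Icc, Int.card_Icc, hY]
  have e1 : ((n:ℤ) - (n/d)*c + 1 - 1) = (n:ℤ) - (n/d)*c := by ring
  have e2 : (((n % d : ℕ):ℤ) + 1 - 1) = ((n % d : ℕ):ℤ) := by ring
  rw [e1, e2]
  push_cast
  rw [Int.toNat_of_nonneg hX0, Int.toNat_of_nonneg (Int.emod_nonneg _ (by positivity : (d:ℤ) ≠ 0))]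

noncomputable def msum (s : Multiset ℚ) (j : ℕ) : ℚ := (s.map (· ^ j)).sum

lemma esymm_cast (s : Multiset ℕ) (k : ℕ) :
    ((s.esymm k : ℕ) : ℚ) = (s.map (fun x : ℕ => (x:ℚ))).esymm k := by
  unfold Multiset.esymm
  rw [Multiset.powersetCard_map, Multiset.map_map]
  rw [Nat.cast_multiset_sum, Multiset.map_map]
  apply congrArg Multiset.sum
  apply Multiset.map_congr rfl
  intro t _
  exact Nat.cast_multiset_prod t

lemma fsize_le {c d n : ℕ} (hc : 0 < c) (hcd : c ≤ d) {P : ℤ × ℤ}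
    (hP : P ∈ minPts c d n) : fsize c d n P ≤ n / d + 1 := by
  have hdZ : (0:ℤ) < d := by exact_mod_cast lt_of_lt_of_le hc hcd
  simp only [minPts, Finset.mem_filter, mem_board] at hP
  obtain ⟨⟨⟨h1, h2⟩, h3, h4⟩, hS⟩ := hP
  unfold fsize
  have step1 : min (((n:ℤ) - P.1) / c) (((n:ℤ) - P.2) / d) ≤ ((n:ℤ) - P.2) / d :=
    min_le_right _ _
  have step2 : ((n:ℤ) - P.2) / d ≤ (n:ℤ) / d := Int.ediv_le_ediv hdZ (by linarith)
  have step3 : (n:ℤ) / d = ((n / d : ℕ) : ℤ) := (Int.natCast_ediv n d).symm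
  have h5 := Int.toNat_le_toNat (le_trans step1 (step2.trans_eq step3))
  rw [Int.toNat_natCast] at h5
  omega

lemma msum_eq {c d n : ℕ} (hc : 0 < c) (hcd : c ≤ d) (hcop : Nat.Coprime c d) {k : ℕ}
    (hk : 0 < k) :
    msum ((lineSizes c d n n).map (fun x : ℕ => (x:ℚ))) k
      = ∑ l ∈ Finset.range (n/d + 1),
          (((l:ℚ)+1)^k - (l:ℚ)^k) *
            (((minPts c d n).filter (fun P => l + 1 ≤ fsize c d n P)).card : ℚ) := by
  unfold msum
  rw [Multiset.map_map, lineSizes_eq hc hcd hcop, Multiset.map_map]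
  have hstep : (Multiset.map (((fun x : ℚ => x ^ k) ∘ fun x : ℕ => (x:ℚ)) ∘ fsize c d n)
      (minPts c d n).val).sum
      = ∑ P ∈ minPts c d n, ((fsize c d n P : ℚ))^k := rfl
  rw [hstep]
  have hsz : ∀ P ∈ minPts c d n, ((fsize c d n P : ℚ))^k
      = ∑ l ∈ Finset.range (n/d + 1),
          if l + 1 ≤ fsize c d n P then (((l:ℚ)+1)^k - (l:ℚ)^k) else 0 := by
    intro P hP
    have h2 : fsize c d n P ≤ n/d + 1 := fsize_le hc hcd hP
    have hfilter : (Finset.range (n/d + 1)).filter (fun l => l + 1 ≤ fsize c d n P)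
        = Finset.range (fsize c d n P) := by
      ext l
      simp only [Finset.mem_filter, Finset.mem_range]
      omega
    calc ((fsize c d n P : ℚ))^k
        = ∑ l ∈ Finset.range (fsize c d n P),
            ((((l+1 : ℕ)):ℚ)^k - ((l:ℕ):ℚ)^k) := by
          rw [Finset.sum_range_sub (fun i : ℕ => ((i:ℚ))^k)]
          rw [Nat.cast_zero, zero_pow (Nat.pos_iff_ne_zero.mp hk)]
          ring
      _ = ∑ l ∈ (Finset.range (n/d + 1)).filter (fun l => l + 1 ≤ fsize c d n P),
            (((l:ℚ)+1)^k - (l:ℚ)^k) := by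
          rw [hfilter]
          apply Finset.sum_congr rfl
          intro l _
          push_cast
          ring
      _ = _ := Finset.sum_filter _ _
  rw [Finset.sum_congr rfl hsz, Finset.sum_comm]
  apply Finset.sum_congr rfl
  intro l _
  rw [← Finset.sum_filter, Finset.sum_const, nsmul_eq_mul, mul_comm]


/-- `f` agrees with a polynomial in `u` on `D`. -/
def PolyOn (D : Set ℕ) (u : ℕ → ℚ) (f : ℕ → ℚ) : Prop :=
  ∃ p : Polynomial ℚ, ∀ n ∈ D, f n = Polynomial.eval (u n) p

namespace PolyOn
variable {D : Set ℕ} {u f g : ℕ → ℚ}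

lemma const (c : ℚ) : PolyOn D u (fun _ => c) := ⟨Polynomial.C c, by simp⟩

lemma self : PolyOn D u u := ⟨Polynomial.X, by simp⟩

lemma add (hf : PolyOn D u f) (hg : PolyOn D u g) : PolyOn D u (f + g) := by
  obtain ⟨p, hp⟩ := hf; obtain ⟨q, hq⟩ := hg
  exact ⟨p + q, fun n hn => by simp [hp n hn, hq n hn]⟩

lemma mul (hf : PolyOn D u f) (hg : PolyOn D u g) : PolyOn D u (f * g) := by
  obtain ⟨p, hp⟩ := hf; obtain ⟨q, hq⟩ := hg
  exact ⟨p * q, fun n hn => by simp [hp n hn, hq n hn]⟩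

lemma congr (hf : PolyOn D u f) (h : ∀ n ∈ D, f n = g n) : PolyOn D u g := by
  obtain ⟨p, hp⟩ := hf
  exact ⟨p, fun n hn => (h n hn).symm.trans (hp n hn)⟩

lemma add' (hf : PolyOn D u f) (hg : PolyOn D u g) : PolyOn D u (fun n => f n + g n) := hf.add hg
lemma mul' (hf : PolyOn D u f) (hg : PolyOn D u g) : PolyOn D u (fun n => f n * g n) := hf.mul hg
lemma neg (hf : PolyOn D u f) : PolyOn D u (fun n => - f n) := ((const (-1)).mul hf).congr (by intros; simp)
lemma sub (hf : PolyOn D u f) (hg : PolyOn D u g) : PolyOn D u (fun n => f n - g n) :=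
  (hf.add' hg.neg).congr (by intros; ring)

lemma sum {ι : Type*} (s : Finset ι) (F : ι → ℕ → ℚ) (h : ∀ i ∈ s, PolyOn D u (F i)) :
    PolyOn D u (fun n => ∑ i ∈ s, F i n) := by
  classical
  induction s using Finset.induction with
  | empty => exact (const 0).congr (by intros; simp)
  | insert a s' hx ih =>
    exact ((h a (mem_insert_self a s')).add' (ih (fun i hi => h i (mem_insert_of_mem hi)))).congr
      (by intro n hn; rw [Finset.sum_insert hx])

lemma evalPoly (p : Polynomial ℚ) (hf : PolyOn D u f) : PolyOn D u (fun n => p.eval (f n)) := by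
  obtain ⟨pf, hpf⟩ := hf
  exact ⟨p.comp pf, fun n hn => by simp [Polynomial.eval_comp, hpf n hn]⟩

end PolyOn

lemma univ_map_get {α : Type*} (l : List α) :
    (Finset.univ.val.map l.get) = (l : Multiset α) := by
  have : Finset.univ.val = ((List.finRange l.length : List (Fin l.length)) : Multiset (Fin l.length)) := by
    simp [Fin.univ_def]
  rw [this, Multiset.map_coe, ← List.ofFn_eq_map, List.ofFn_get]

lemma multiset_newton (s : Multiset ℚ) (k : ℕ) :
    (k : ℚ) * s.esymm k = (-1)^(k+1) *
      ∑ a ∈ (antidiagonal k).filter (fun a => a.1 < k), (-1)^a.1 * s.esymm a.1 * msum s a.2 := by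
  classical
  set l := s.toList with hl
  have hs : (l : Multiset ℚ) = s := s.coe_toList
  have h := congrArg (MvPolynomial.aeval l.get) (MvPolynomial.mul_esymm_eq_sum (Fin l.length) ℚ k)
  have he : ∀ j, MvPolynomial.aeval l.get (MvPolynomial.esymm (Fin l.length) ℚ j) = s.esymm j := by
    intro j
    rw [MvPolynomial.aeval_esymm_eq_multiset_esymm, univ_map_get, hs]
  have hp : ∀ j, MvPolynomial.aeval l.get (MvPolynomial.psum (Fin l.length) ℚ j) = msum s j := by
    intro j
    rw [MvPolynomial.psum]
    simp only [map_sum, map_pow, MvPolynomial.aeval_X]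
    rw [msum, ← hs, Multiset.map_coe, Multiset.sum_coe]
    conv_rhs => rw [← List.ofFn_get l, List.map_ofFn, List.sum_ofFn]
    rfl
  simp only [map_mul, map_sum, map_pow, map_natCast, map_neg, map_one, he, hp] at h
  convert h using 2

lemma esymm_polyOn {D : Set ℕ} {u : ℕ → ℚ} (g : ℕ → Multiset ℚ) (q : ℕ)
    (hp : ∀ k, 1 ≤ k → k ≤ q → PolyOn D u (fun n => msum (g n) k)) :
    ∀ j, j ≤ q → PolyOn D u (fun n => (g n).esymm j) := by
  intro j
  induction j using Nat.strong_induction_on with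
  | _ j ih =>
    intro hjq
    rcases Nat.eq_zero_or_pos j with hj | hj
    · subst hj
      exact (PolyOn.const 1).congr (by intro n hn; simp [Multiset.esymm])
    · have key : ∀ n, (g n).esymm j = (j : ℚ)⁻¹ * ((-1)^(j+1) *
          ∑ a ∈ (antidiagonal j).filter (fun a => a.1 < j),
            (-1)^a.1 * (g n).esymm a.1 * msum (g n) a.2) := by
        intro n
        rw [← multiset_newton (g n) j]
        field_simp
      have : PolyOn D u (fun n => (j : ℚ)⁻¹ * ((-1)^(j+1) *
          ∑ a ∈ (antidiagonal j).filter (fun a => a.1 < j),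
            (-1)^a.1 * (g n).esymm a.1 * msum (g n) a.2)) := by
        apply (PolyOn.const ((j:ℚ)⁻¹)).mul'
        apply (PolyOn.const ((-1:ℚ)^(j+1))).mul'
        apply PolyOn.sum
        intro a ha
        simp only [mem_filter, Finset.HasAntidiagonal.mem_antidiagonal] at ha
        have h1 : PolyOn D u (fun n => (g n).esymm a.1) := ih a.1 (ha.2) (le_trans (le_of_lt ha.2) hjq)
        have h2 : PolyOn D u (fun n => msum (g n) a.2) := by
          apply hp
          · omega
          · omega
        exact (((PolyOn.const ((-1:ℚ)^a.1)).mul' h1).mul' h2)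
      exact this.congr (fun n _ => (key n).symm)

lemma faulhaber_poly (p : Polynomial ℚ) :
    ∃ F : Polynomial ℚ, ∀ m : ℕ, ∑ l ∈ Finset.range m, p.eval (l:ℚ) = F.eval (m:ℚ) := by
  induction p using Polynomial.induction_on with
  | C a =>
    refine ⟨Polynomial.C a * Polynomial.X, fun m => ?_⟩
    rw [Polynomial.eval_mul, Polynomial.eval_C, Polynomial.eval_X]
    simp only [Polynomial.eval_C, Finset.sum_const, Finset.card_range, nsmul_eq_mul]
    ring
  | add p q hp hq =>
    obtain ⟨F, hF⟩ := hp; obtain ⟨G, hG⟩ := hq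
    exact ⟨F + G, fun m => by simp [Finset.sum_add_distrib, hF m, hG m]⟩
  | monomial e a _ =>
    refine ⟨Polynomial.C a * ∑ i ∈ Finset.range (e + 1 + 1),
      Polynomial.C (bernoulli i * ((e + 1 + 1).choose i) / (e + 1 + 1)) *
        Polynomial.X ^ (e + 1 + 1 - i), fun m => ?_⟩
    calc ∑ l ∈ Finset.range m, (Polynomial.C a * Polynomial.X ^ (e+1)).eval (l:ℚ)
        = a * ∑ l ∈ Finset.range m, ((l:ℚ))^(e+1) := by
          rw [Finset.mul_sum]
          apply Finset.sum_congr rfl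
          intro l _
          rw [Polynomial.eval_mul, Polynomial.eval_C, Polynomial.eval_pow, Polynomial.eval_X]
      _ = a * ∑ i ∈ Finset.range (e + 1 + 1),
            bernoulli i * ((e + 1 + 1).choose i) * (m:ℚ) ^ (e + 1 + 1 - i) / (e + 1 + 1) := by
          rw [sum_range_pow]
          congr 1
          apply Finset.sum_congr rfl
          intro i _
          push_cast
          ring
      _ = _ := by
          simp only [Polynomial.eval_mul, Polynomial.eval_C, Polynomial.eval_finset_sum,
            Polynomial.eval_pow, Polynomial.eval_X]
          rw [Finset.mul_sum, Finset.mul_sum]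
          apply Finset.sum_congr rfl
          intro i _
          push_cast
          ring

lemma msum_polyOn (c d q r : ℕ) (hc : 0 < c) (hcd : c ≤ d) (hcop : Nat.Coprime c d)
    (hq : 0 < q) {k : ℕ} (hk : 0 < k) :
    PolyOn {n : ℕ | q*d ≤ n ∧ n % d = r} (fun n => ((n/d : ℕ) : ℚ))
      (fun n => msum ((lineSizes c d n n).map (fun x : ℕ => (x:ℚ))) k) := by
  have hd : 0 < d := lt_of_lt_of_le hc hcd
  set D : Set ℕ := {n : ℕ | q*d ≤ n ∧ n % d = r} with hD
  set u : ℕ → ℚ := fun n => ((n/d : ℕ) : ℚ) with hu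
  set A : Polynomial ℚ := Polynomial.C ((c:ℚ)+d) *
    ((Polynomial.X+1)^k - Polynomial.X^k) with hA
  set B : Polynomial ℚ := ((Polynomial.X+1)^k - Polynomial.X^k) *
    (Polynomial.C (-(2*(c:ℚ)*d)) * Polynomial.X - Polynomial.C ((c:ℚ)*d)) with hB
  set T : Polynomial ℚ := (Polynomial.X+1)^k - Polynomial.X^k with hT
  -- pointwise formula
  have claim : ∀ n ∈ D, msum ((lineSizes c d n n).map (fun x : ℕ => (x:ℚ))) k
      = (n:ℚ) * (∑ l ∈ Finset.range (n/d), A.eval (l:ℚ))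
        + (∑ l ∈ Finset.range (n/d), B.eval (l:ℚ))
        + T.eval (u n) * (((n:ℚ) - (u n)*c) * r) := by
    rintro n ⟨hn1, hn2⟩
    have hmid : ∀ l, l < n/d →
        ((((minPts c d n).filter (fun P => l + 1 ≤ fsize c d n P)).card : ℚ))
          = c*((n:ℚ) - l*d) + d*((n:ℚ) - l*c) - c*d := by
      intro l hl
      have hld : (l+1)*d ≤ n := le_trans (Nat.mul_le_mul_right d hl) (Nat.div_mul_le_self n d)
      have hlc : (l+1)*c ≤ n := le_trans (Nat.mul_le_mul_left (l+1) hcd) hld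
      have hX : (c:ℤ) ≤ (n:ℤ) - (l:ℤ)*(c:ℤ) := by
        have : ((l+1)*c : ℕ) ≤ (n:ℕ) := hlc
        have := (Nat.cast_le (α := ℤ)).mpr this
        push_cast at this
        linarith
      have hY : (d:ℤ) ≤ (n:ℤ) - (l:ℤ)*(d:ℤ) := by
        have : ((l+1)*d : ℕ) ≤ (n:ℕ) := hld
        have := (Nat.cast_le (α := ℤ)).mpr this
        push_cast at this
        linarith
      have h2 := count_mid (l := l) (n := n) hc hcd hX hY
      rw [filter_ge_eq hc hcd]
      have := congrArg (fun x : ℤ => (x:ℚ)) h2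
      push_cast at this ⊢
      linarith
    have htop : ((((minPts c d n).filter (fun P => n/d + 1 ≤ fsize c d n P)).card : ℚ))
        = ((n:ℚ) - (u n)*c) * r := by
      have h2 := count_top (c := c) (d := d) (n := n) hc hcd
      rw [hn2] at h2
      rw [filter_ge_eq hc hcd]
      have hq2 := congrArg (fun x : ℤ => (x:ℚ)) h2
      have e0 : ((n/d : ℕ) : ℤ) = (n:ℤ)/(d:ℤ) := Int.natCast_ediv n d
      have e' : (((n/d : ℕ)):ℚ) = (((n:ℤ)/(d:ℤ) : ℤ):ℚ) := by rw [← e0]; exact (Int.cast_natCast _).symm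
      simp only [hu]
      rw [e']
      push_cast at hq2 ⊢
      linarith
    rw [msum_eq hc hcd hcop hk, Finset.sum_range_succ, htop]
    have hmid' : ∀ l ∈ Finset.range (n/d),
        (((l:ℚ)+1)^k - (l:ℚ)^k) *
          ((((minPts c d n).filter (fun P => l + 1 ≤ fsize c d n P)).card : ℚ))
        = (n:ℚ) * A.eval (l:ℚ) + B.eval (l:ℚ) := by
      intro l hl
      rw [hmid l (Finset.mem_range.mp hl)]
      simp only [hA, hB, hT, Polynomial.eval_mul, Polynomial.eval_sub, Polynomial.eval_add,
        Polynomial.eval_pow, Polynomial.eval_C, Polynomial.eval_X, Polynomial.eval_one]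
      ring
    rw [Finset.sum_congr rfl hmid']
    rw [Finset.sum_add_distrib, ← Finset.mul_sum]
    have hTe : (((n/d : ℕ):ℚ)+1)^k - ((n/d : ℕ):ℚ)^k = T.eval (u n) := by
      simp [hT, hu]
    rw [hTe]
  -- now assemble PolyOn
  have hnn : PolyOn D u (fun n => (n:ℚ)) := by
    refine ⟨Polynomial.C (d:ℚ) * Polynomial.X + Polynomial.C (r:ℚ), ?_⟩
    rintro n ⟨hn1, hn2⟩
    have h := Nat.div_add_mod n d
    rw [hn2] at h
    have : ((d * (n/d) + r : ℕ) : ℚ) = (n:ℚ) := by exact_mod_cast h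
    push_cast at this
    simp only [Polynomial.eval_add, Polynomial.eval_mul, Polynomial.eval_C, Polynomial.eval_X]
    rw [hu]
    push_cast
    linarith
  obtain ⟨FA, hFA⟩ := faulhaber_poly A
  obtain ⟨FB, hFB⟩ := faulhaber_poly B
  have hSA : PolyOn D u (fun n => ∑ l ∈ Finset.range (n/d), A.eval (l:ℚ)) :=
    ⟨FA, fun n _ => hFA (n/d)⟩
  have hSB : PolyOn D u (fun n => ∑ l ∈ Finset.range (n/d), B.eval (l:ℚ)) :=
    ⟨FB, fun n _ => hFB (n/d)⟩
  have ht1 : PolyOn D u (fun n => T.eval (u n)) := PolyOn.evalPoly T PolyOn.self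
  have ht2 : PolyOn D u (fun n => (n:ℚ) - (u n)*(c:ℚ)) :=
    hnn.sub (PolyOn.self.mul' (PolyOn.const (c:ℚ)))
  have htop : PolyOn D u (fun n => T.eval (u n) * (((n:ℚ) - (u n)*c) * r)) :=
    ht1.mul' (ht2.mul' (PolyOn.const (r:ℚ)))
  have total := ((hnn.mul' hSA).add' hSB).add' htop
  exact total.congr (fun n hn => (claim n hn).symm)


/-- Theorem 3.2: for a one-move rider with basic move `(c,d)`, `0 < c ≤ d`,
`gcd(c,d) = 1`, the counting function `u(q; n) = e_q(L^{d/c}(n,n))` of nonattacking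
configurations on the `n × n` board is, for `n ≥ qd`, a quasipolynomial in `n` whose
coefficients are periodic with period dividing `d`: for each residue class of `n`
modulo `d` it is given by a single polynomial. -/
theorem one_move_rider_period (c d q : ℕ) (hc : 0 < c) (hcd : c ≤ d)
    (hcop : Nat.Coprime c d) (hq : 0 < q) :
    ∃ P : ℕ → Polynomial ℚ, ∀ n : ℕ, q * d ≤ n →
      (((lineSizes c d n n).esymm q : ℕ) : ℚ) = (P (n % d)).eval (n : ℚ) := by
  have hd : 0 < d := lt_of_lt_of_le hc hcd
  have key : ∀ r : ℕ, ∃ p : Polynomial ℚ, ∀ n : ℕ, q*d ≤ n → n % d = r →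
      (((lineSizes c d n n).esymm q : ℕ) : ℚ) = p.eval ((n:ℚ)) := by
    intro r
    have hpoly := esymm_polyOn (D := {n : ℕ | q*d ≤ n ∧ n % d = r})
      (u := fun n => ((n/d : ℕ):ℚ))
      (fun n => (lineSizes c d n n).map (fun x : ℕ => (x:ℚ))) q
      (fun k hk1 _ => msum_polyOn c d q r hc hcd hcop hq (Nat.lt_of_lt_of_le Nat.zero_lt_one hk1))
      q le_rfl
    obtain ⟨p, hp⟩ := hpoly
    refine ⟨p.comp (Polynomial.C (1/(d:ℚ)) * (Polynomial.X - Polynomial.C (r:ℚ))), ?_⟩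
    intro n hn hr
    have h1 : (Multiset.map (fun x : ℕ => (x:ℚ)) (lineSizes c d n n)).esymm q
        = Polynomial.eval (((n/d : ℕ):ℚ)) p := hp n ⟨hn, hr⟩
    rw [esymm_cast, h1, Polynomial.eval_comp]
    congr 1
    simp only [Polynomial.eval_mul, Polynomial.eval_C, Polynomial.eval_sub, Polynomial.eval_X]
    have hmod := Nat.div_add_mod n d
    rw [hr] at hmod
    have : ((d * (n/d) + r : ℕ) : ℚ) = (n:ℚ) := by exact_mod_cast hmod
    push_cast at this
    have hdQ : ((d:ℚ)) ≠ 0 := by positivity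
    field_simp
    linarith
  choose P hP using key
  exact ⟨P, fun n hn => hP (n % d) n hn rfl⟩
end

section
/- Let m ≥ n ≥ 1 and q ≥ 1 be integers. The number of nonattacking configurations of q semibishops (one-move riders with move (1,1)) on the m×n board equals Σ_{l=0}^{m-n+1} n^{m-n-l+1} · C(m-n+1, l) · Σ_j [n brack j]·[n brack m+n-q-j-l+1], where [· brack ·] denotes unsigned Stirling numbers of the first kind and the inner sum is over all j for which both Stirling numbers are defined (1 ≤ j ≤ m+n-q-l). -/
/-- Unsigned Stirling numbers of the first kind. -/
def stirling1 : ℕ → ℕ → ℕ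
  | 0, 0 => 1
  | 0, _ + 1 => 0
  | _ + 1, 0 => 0
  | n + 1, k + 1 => n * stirling1 n (k + 1) + stirling1 n k

open Polynomial Finset

lemma stirling1_zero_right : ∀ n, 0 < n → stirling1 n 0 = 0
  | _ + 1, _ => rfl

lemma stirling1_zero_left : ∀ k, stirling1 0 k = if k = 0 then 1 else 0
  | 0 => rfl
  | _ + 1 => rfl

lemma stirl_poly (n : ℕ) (k : ℕ) :
    (∏ i ∈ range n, (X + C (i + 1) : Polynomial ℕ)).coeff k = stirling1 (n + 1) (k + 1) := by
  induction n generalizing k with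
  | zero =>
    cases k <;> simp [stirling1, stirling1_zero_left, coeff_one]
  | succ n ih =>
    rw [prod_range_succ, mul_add, coeff_add, mul_comm (∏ i ∈ range n, (X + C (i+1) : Polynomial ℕ)) X, coeff_mul_C]
    have h1 : ((X : Polynomial ℕ) * ∏ i ∈ range n, (X + C (i + 1))).coeff k
        = if k = 0 then 0 else stirling1 (n+1) k := by
      rw [mul_comm]
      cases k with
      | zero => simp
      | succ k => rw [coeff_mul_X]; simpa using ih k
    rw [h1, ih]
    show _ = (n + 1) * stirling1 (n + 1) (k + 1) + stirling1 (n + 1) k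
    cases k with
    | zero => simp [stirling1_zero_right, Nat.mul_comm]
    | succ k => push_cast; ring


noncomputable def fib (m n : ℕ) (d : ℤ) : Finset (ℤ × ℤ) := (board m n).filter (fun p => p.1 - p.2 = d)

lemma mem_fib {m n : ℕ} {d : ℤ} {p : ℤ × ℤ} :
    p ∈ fib m n d ↔ (1 ≤ p.1 ∧ p.1 ≤ m ∧ 1 ≤ p.2 ∧ p.2 ≤ n ∧ p.1 - p.2 = d) := by
  simp [fib, board, Finset.mem_filter, Finset.mem_product]; tauto

lemma fib_card (m n : ℕ) (d : ℤ) :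
    (fib m n d).card = (min (m : ℤ) (d + n) + 1 - max 1 (d + 1)).toNat := by
  have : fib m n d = (Finset.Icc (max 1 (d+1)) (min (m:ℤ) (d+n))).image (fun x => (x, x - d)) := by
    ext p
    simp only [Finset.mem_image, Finset.mem_Icc, mem_fib]
    constructor
    · rintro ⟨h1, h2, h3, h4, h5⟩
      exact ⟨p.1, by omega, by rw [show p.1 - d = p.2 by omega]⟩
    · rintro ⟨x, hx, rfl⟩
      simp only
      omega
  rw [this, Finset.card_image_of_injective _ (fun a b h => (Prod.mk.injEq _ _ _ _ ▸ h).1),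
    Int.card_Icc]

section count
variable (m n q : ℕ)

noncomputable def Dset : Finset ℤ := Finset.Icc (1 - n : ℤ) (m - 1)

lemma count_eq (hn : 0 < n) (hnm : n ≤ m) :
    (((board m n).powersetCard q).filter
        (fun S => ∀ p ∈ S, ∀ p' ∈ S, p.1 - p.2 = p'.1 - p'.2 → p = p')).card
      = ∑ T ∈ (Dset m n).powersetCard q, ∏ d ∈ T, (fib m n d).card := by
  set A := (((board m n).powersetCard q).filter
        (fun S => ∀ p ∈ S, ∀ p' ∈ S, p.1 - p.2 = p'.1 - p'.2 → p = p')) with hA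
  have hmemA : ∀ S ∈ A, S ⊆ board m n ∧ S.card = q ∧
      ∀ p ∈ S, ∀ p' ∈ S, p.1 - p.2 = p'.1 - p'.2 → p = p' := by
    intro S hS
    rw [hA, Finset.mem_filter, Finset.mem_powersetCard] at hS
    tauto
  have hmap : ∀ S ∈ A, S.image (fun p : ℤ × ℤ => p.1 - p.2) ∈ (Dset m n).powersetCard q := by
    intro S hS
    obtain ⟨hsub, hcard, hinj⟩ := hmemA S hS
    rw [Finset.mem_powersetCard]
    constructor
    · intro d hd
      rw [Finset.mem_image] at hd
      obtain ⟨p, hp, rfl⟩ := hd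
      have := hsub hp
      simp only [board, Finset.mem_product, Finset.mem_Icc] at this
      simp only [Dset, Finset.mem_Icc]
      omega
    · rw [Finset.card_image_of_injOn, hcard]
      intro p hp p' hp' h
      exact hinj p hp p' hp' h
  rw [Finset.card_eq_sum_card_fiberwise hmap]
  refine Finset.sum_congr rfl (fun T hT => ?_)
  rw [Finset.mem_powersetCard] at hT
  -- bijection with pi set
  rw [← Finset.card_pi (T) (fun d => fib m n d)]
  have key : ∀ S ∈ A.filter (fun S => S.image (fun p : ℤ × ℤ => p.1 - p.2) = T),
      ∀ d ∈ T, ∃! p, p ∈ S ∧ p.1 - p.2 = d := by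
    intro S hS d hd
    rw [Finset.mem_filter] at hS
    obtain ⟨hSA, himg⟩ := hS
    obtain ⟨hsub, hcard, hinj⟩ := hmemA S hSA
    rw [← himg, Finset.mem_image] at hd
    obtain ⟨p, hp, hpd⟩ := hd
    exact ⟨p, ⟨hp, hpd⟩, fun p' ⟨hp', hpd'⟩ => hinj p' hp' p hp (by omega)⟩
  refine Finset.card_bij' (fun S hS => fun d hd => Finset.choose _ S (key S hS d hd))
    (fun f hf => T.attach.image (fun d => f d.1 d.2)) ?_ ?_ ?_ ?_
  · -- forward maps into pi
    intro S hS
    rw [Finset.mem_pi]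
    intro d hd
    have h1 := Finset.choose_mem _ S (key S hS d hd)
    have h2 := Finset.choose_property (fun p : ℤ×ℤ => p.1 - p.2 = d) S (key S hS d hd)
    rw [Finset.mem_filter] at hS
    rw [mem_fib]
    obtain ⟨hsub, hcard, hinj⟩ := hmemA S hS.1
    have := hsub h1
    simp only [board, Finset.mem_product, Finset.mem_Icc] at this
    exact ⟨this.1.1, this.1.2, this.2.1, this.2.2, h2⟩
  · -- backward maps into A.filter
    intro f hf
    rw [Finset.mem_pi] at hf
    have hfb : ∀ d (hd : d ∈ T), f d hd ∈ fib m n d := fun d hd => hf d hd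
    have hinj2 : ∀ (a b : {x // x ∈ T}), f a.1 a.2 = f b.1 b.2 → a = b := by
      intro a b h
      have ha := mem_fib.mp (hfb a.1 a.2)
      have hb := mem_fib.mp (hfb b.1 b.2)
      have : a.1 = b.1 := by rw [← ha.2.2.2.2, ← hb.2.2.2.2, h]
      exact Subtype.ext this
    have hcard2 : (T.attach.image (fun d => f d.1 d.2)).card = q := by
      rw [Finset.card_image_of_injective _ hinj2, Finset.card_attach, hT.2]
    have himg2 : (T.attach.image (fun d => f d.1 d.2)).image (fun p : ℤ × ℤ => p.1 - p.2) = T := by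
      rw [Finset.image_image]
      ext d
      simp only [Finset.mem_image, Finset.mem_attach, Function.comp]
      constructor
      · rintro ⟨a, -, rfl⟩
        have := mem_fib.mp (hfb a.1 a.2)
        rw [this.2.2.2.2]; exact a.2
      · intro hd
        exact ⟨⟨d, hd⟩, trivial, (mem_fib.mp (hfb d hd)).2.2.2.2⟩
    rw [Finset.mem_filter, hA, Finset.mem_filter, Finset.mem_powersetCard]
    refine ⟨⟨⟨?_, hcard2⟩, ?_⟩, himg2⟩
    · intro p hp
      rw [Finset.mem_image] at hp
      obtain ⟨a, -, rfl⟩ := hp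
      exact Finset.mem_of_mem_filter _ (hfb a.1 a.2)
    · intro p hp p' hp' h
      rw [Finset.mem_image] at hp hp'
      obtain ⟨a, -, rfl⟩ := hp
      obtain ⟨b, -, rfl⟩ := hp'
      have ha := mem_fib.mp (hfb a.1 a.2)
      have hb := mem_fib.mp (hfb b.1 b.2)
      have : a = b := Subtype.ext (by omega)
      rw [this]
  · -- j ∘ i = id
    intro S hS
    ext p
    simp only [Finset.mem_image, Finset.mem_attach, true_and]
    constructor
    · rintro ⟨a, rfl⟩
      exact (Finset.choose_spec (fun p : ℤ×ℤ => p.1 - p.2 = a.1) S (key S hS a.1 a.2)).1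
    · intro hp
      have hd : p.1 - p.2 ∈ T := by
        rw [Finset.mem_filter] at hS
        rw [← hS.2, Finset.mem_image]
        exact ⟨p, hp, rfl⟩
      refine ⟨⟨p.1 - p.2, hd⟩, ?_⟩
      have hu := key S hS (p.1 - p.2) hd
      have h1 := (Finset.choose_spec (fun p' : ℤ×ℤ => p'.1 - p'.2 = p.1 - p.2) S (key S hS _ hd))
      exact hu.unique ⟨h1.1, h1.2⟩ ⟨hp, rfl⟩
  · -- i ∘ j = id
    intro f hf
    funext d hd
    beta_reduce
    generalize_proofs h1 h2
    have hchoose := Finset.choose_spec (fun p : ℤ×ℤ => p.1 - p.2 = d)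
      (T.attach.image (fun d => f d.1 d.2)) h2
    obtain ⟨hmem, hprop⟩ := hchoose
    rw [Finset.mem_image] at hmem
    obtain ⟨a, -, ha⟩ := hmem
    rw [Finset.mem_pi] at hf
    have := mem_fib.mp (hf a.1 a.2)
    have had : a.1 = d := by
      have := this.2.2.2.2
      rw [ha] at this
      omega
    have : a = ⟨d, hd⟩ := Subtype.ext had
    rw [this] at ha
    exact ha.symm


lemma prod_factor (m n : ℕ) (hn : 0 < n) (hnm : n ≤ m) :
    ∏ d ∈ Dset m n, ((X : Polynomial ℕ) + C (fib m n d).card)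
      = (X + C n) ^ (m - n + 1) * (∏ i ∈ range (n - 1), (X + C (i + 1))) ^ 2 := by
  have hsplit : Dset m n = (Finset.Icc (1 - n : ℤ) (-1) ∪ Finset.Icc 0 (m - n : ℤ))
      ∪ Finset.Icc (m - n + 1 : ℤ) (m - 1) := by
    ext d; simp only [Dset, Finset.mem_union, Finset.mem_Icc]; omega
  have hd1 : Disjoint (Finset.Icc (1 - n : ℤ) (-1)) (Finset.Icc 0 (m - n : ℤ)) := by
    rw [Finset.disjoint_left]; intro a ha hb
    simp only [Finset.mem_Icc] at ha hb; omega
  have hd2 : Disjoint ((Finset.Icc (1 - n : ℤ) (-1)) ∪ Finset.Icc 0 (m - n : ℤ))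
      (Finset.Icc (m - n + 1 : ℤ) (m - 1)) := by
    rw [Finset.disjoint_left]; intro a ha hb
    simp only [Finset.mem_union, Finset.mem_Icc] at ha hb; omega
  rw [hsplit, Finset.prod_union hd2, Finset.prod_union hd1]
  have hlow : ∏ d ∈ Finset.Icc (1 - n : ℤ) (-1), ((X : Polynomial ℕ) + C (fib m n d).card)
      = ∏ i ∈ range (n - 1), (X + C (i + 1)) := by
    refine Finset.prod_nbij' (fun d => (d + n - 1).toNat) (fun i => (i : ℤ) + 1 - n)
      ?_ ?_ ?_ ?_ ?_
    · intro d hd; simp only [Finset.mem_Icc] at hd; simp only [Finset.mem_range]; omega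
    · intro i hi; simp only [Finset.mem_range] at hi; simp only [Finset.mem_Icc]; omega

    · intro d hd; simp only [Finset.mem_Icc] at hd; beta_reduce; omega
    · intro i hi; simp only [Finset.mem_range] at hi; beta_reduce; omega
    · intro d hd
      simp only [Finset.mem_Icc] at hd
      beta_reduce
      congr 1
      congr 1
      rw [fib_card, min_def, max_def]
      split_ifs <;> omega
  have hmid : ∏ d ∈ Finset.Icc (0 : ℤ) (m - n), ((X : Polynomial ℕ) + C (fib m n d).card)
      = (X + C n) ^ (m - n + 1) := by
    rw [Finset.prod_congr rfl (fun d hd => ?_), Finset.prod_const, Int.card_Icc]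
    · congr 1; omega
    · simp only [Finset.mem_Icc] at hd
      congr 1
      congr 1
      rw [fib_card, min_def, max_def]
      split_ifs <;> omega
  have hhigh : ∏ d ∈ Finset.Icc (m - n + 1 : ℤ) (m - 1), ((X : Polynomial ℕ) + C (fib m n d).card)
      = ∏ i ∈ range (n - 1), (X + C (i + 1)) := by
    refine Finset.prod_nbij' (fun d => (m - d - 1).toNat) (fun i => (m : ℤ) - 1 - i)
      ?_ ?_ ?_ ?_ ?_
    · intro d hd; simp only [Finset.mem_Icc] at hd; simp only [Finset.mem_range]; omega
    · intro i hi; simp only [Finset.mem_range] at hi; simp only [Finset.mem_Icc]; omega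

    · intro d hd; simp only [Finset.mem_Icc] at hd; beta_reduce; omega
    · intro i hi; simp only [Finset.mem_range] at hi; beta_reduce; omega
    · intro d hd
      simp only [Finset.mem_Icc] at hd
      beta_reduce
      congr 1
      congr 1
      rw [fib_card, min_def, max_def]
      split_ifs <;> omega
  rw [hlow, hmid, hhigh]
  ring


lemma coeff_final (m n q : ℕ) (hn : 0 < n) (hnm : n ≤ m) (hq : 1 ≤ q) (hq2 : q ≤ m + n - 1) :
    ((X + C n) ^ (m - n + 1) * (∏ i ∈ range (n - 1), (X + C (i + 1))) ^ 2
        : Polynomial ℕ).coeff (m + n - 1 - q)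
      = ∑ l ∈ range (m - n + 2),
          n ^ (m - n + 1 - l) * Nat.choose (m - n + 1) l *
            ∑ j ∈ Finset.Icc 1 (m + n - q - l),
              stirling1 n j * stirling1 n (m + n + 1 - q - j - l) := by
  set M := m - n + 1 with hM
  set k := m + n - 1 - q with hk
  clear_value M k
  have hP2 : ∀ b : ℕ, ((∏ i ∈ range (n - 1), (X + C (i + 1) : Polynomial ℕ)) ^ 2).coeff b
      = ∑ u ∈ range (b + 1), stirling1 n (u + 1) * stirling1 n (b - u + 1) := by
    intro b
    rw [sq, coeff_mul, Finset.Nat.sum_antidiagonal_eq_sum_range_succ_mk]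
    refine Finset.sum_congr rfl (fun u hu => ?_)
    rw [stirl_poly, stirl_poly, Nat.sub_add_cancel hn]
  rw [coeff_mul, Finset.Nat.sum_antidiagonal_eq_sum_range_succ_mk]
  have step1 : ∀ l ∈ range (k + 1),
      ((X + C n : Polynomial ℕ) ^ M).coeff l *
          ((∏ i ∈ range (n - 1), (X + C (i + 1) : Polynomial ℕ)) ^ 2).coeff (k - l)
        = n ^ (M - l) * Nat.choose M l *
            ∑ j ∈ Finset.Icc 1 (m + n - q - l),
              stirling1 n j * stirling1 n (m + n + 1 - q - j - l) := by
    intro l hl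
    rw [Finset.mem_range] at hl
    rw [coeff_X_add_C_pow, hP2, Nat.cast_id]
    congr 1
    refine Finset.sum_nbij' (fun u => u + 1) (fun j => j - 1) ?_ ?_ ?_ ?_ ?_
    · intro u hu; rw [Finset.mem_range] at hu; rw [Finset.mem_Icc]; beta_reduce; omega
    · intro j hj; rw [Finset.mem_Icc] at hj; rw [Finset.mem_range]; beta_reduce; omega
    · intro u hu; beta_reduce; omega
    · intro j hj; rw [Finset.mem_Icc] at hj; beta_reduce; omega
    · intro u hu
      rw [Finset.mem_range] at hu
      beta_reduce
      congr 2
      omega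
  rw [Finset.sum_congr rfl step1]
  have hext : ∀ (N : ℕ) , N + 1 ≤ k + M + 2 →
      (∀ l, N + 1 ≤ l → l < k + M + 2 →
        (n ^ (M - l) * Nat.choose M l *
          ∑ j ∈ Finset.Icc 1 (m + n - q - l),
            stirling1 n j * stirling1 n (m + n + 1 - q - j - l)) = 0) →
      ∑ l ∈ range (N + 1), (n ^ (M - l) * Nat.choose M l *
          ∑ j ∈ Finset.Icc 1 (m + n - q - l),
            stirling1 n j * stirling1 n (m + n + 1 - q - j - l))
        = ∑ l ∈ range (k + M + 2), (n ^ (M - l) * Nat.choose M l *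
          ∑ j ∈ Finset.Icc 1 (m + n - q - l),
            stirling1 n j * stirling1 n (m + n + 1 - q - j - l)) := by
    intro N hN h0
    refine Finset.sum_subset (Finset.range_subset_range.mpr hN) ?_
    intro l hl hl'
    rw [Finset.mem_range] at hl
    rw [Finset.mem_range, not_lt] at hl'
    exact h0 l hl' hl
  rw [hext k (by omega) (fun l hl hl' => ?_), show m - n + 2 = M + 1 from by omega,
    hext M (by omega) (fun l hl hl' => ?_)]
  · -- l ≥ M + 1 : choose vanishes
    rw [Nat.choose_eq_zero_of_lt (by omega)]
    simp
  · -- l ≥ k + 1 : inner Icc empty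
    have : m + n - q - l = 0 := by omega
    rw [this]
    simp


set_option maxHeartbeats 1000000 in
/-- The number of nonattacking configurations of `q` semibishops (one-move riders
with move `(1,1)`, attacking along diagonals `p ↦ p₁ - p₂`) on the `m × n` board
with `m ≥ n ≥ 1`. -/
theorem semibishop_count (m n q : ℕ) (hn : 0 < n) (hnm : n ≤ m) (hq : 0 < q) :
    (((board m n).powersetCard q).filter
        (fun S => ∀ p ∈ S, ∀ p' ∈ S, p.1 - p.2 = p'.1 - p'.2 → p = p')).card
      = ∑ l ∈ Finset.range (m - n + 2),
          n ^ (m - n + 1 - l) * Nat.choose (m - n + 1) l *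
            ∑ j ∈ Finset.Icc 1 (m + n - q - l),
              stirling1 n j * stirling1 n (m + n + 1 - q - j - l) := by
  rw [count_eq m n q hn hnm]
  have hcard : (Dset m n).card = m + n - 1 := by
    rw [Dset, Int.card_Icc]
    omega
  by_cases hq2 : q ≤ m + n - 1
  · have hk : m + n - 1 - q ≤ (Dset m n).card := by omega
    have := Finset.prod_X_add_C_coeff (Dset m n)
      (fun d => ((fib m n d).card : ℕ)) (k := m + n - 1 - q) (by omega)
    rw [hcard, show m + n - 1 - (m + n - 1 - q) = q from by omega] at this
    rw [← this, prod_factor m n hn hnm, coeff_final m n q hn hnm hq hq2]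
  · -- q too large: both sides vanish
    have h1 : (Dset m n).powersetCard q = ∅ := by
      apply Finset.powersetCard_eq_empty.mpr
      omega
    rw [h1, Finset.sum_empty]
    symm
    refine Finset.sum_eq_zero (fun l hl => ?_)
    rw [show m + n - q - l = 0 from by omega]
    simp
end count
end

section
/- Let L be a finite multiset of natural numbers in which the distinct values are a with multiplicity A, a+1 with multiplicity B, and each of 1, 2, …, a-1 with multiplicity M. Then for any q ≥ 0, the q-th elementary symmetric function of L equals Σ_{k+j+x₁+⋯+x_M = q} C(A, j)·a^j · C(B, k)·(a+1)^k · Π_{i=1}^{M} [a brack a - xᵢ], where [· brack ·] are unsigned Stirling numbers of the first kind. -/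
open Polynomial Finset

lemma stirling1_eq_zero_of_lt : ∀ {n k : ℕ}, n < k → stirling1 n k = 0
  | 0, _ + 1, _ => rfl
  | n + 1, k + 1, h => by
    have h1 : n < k + 1 := by omega
    have h2 : n < k := by omega
    rw [stirling1, stirling1_eq_zero_of_lt h1, stirling1_eq_zero_of_lt h2, mul_zero]

lemma stirling1_zero_right_s16 {a : ℕ} (ha : 0 < a) : stirling1 a 0 = 0 := by
  cases a with
  | zero => omega
  | succ n => rfl

lemma stirling_poly' (a : ℕ) (t : ℕ) :
    (∏ l ∈ Finset.Icc 1 a, (X + C (l : ℕ))).coeff t = stirling1 (a + 1) (t + 1) := by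
  induction a generalizing t with
  | zero =>
    rw [show Finset.Icc 1 0 = ∅ from rfl, Finset.prod_empty]
    cases t with
    | zero => simp [stirling1]
    | succ t => simp [coeff_one, stirling1, show stirling1 0 (t + 1) = 0 from rfl]
  | succ n ih =>
    rw [Finset.prod_Icc_succ_top (by omega), mul_add]
    cases t with
    | zero =>
      rw [coeff_add, coeff_zero_eq_eval_zero, coeff_zero_eq_eval_zero]
      simp only [eval_mul, eval_X, mul_zero, eval_C, zero_add]
      have := ih 0
      rw [coeff_zero_eq_eval_zero] at this
      rw [this]
      rw [show stirling1 (n + 1 + 1) (0 + 1) = (n+1) * stirling1 (n+1) 1 + stirling1 (n+1) 0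
        from rfl, show stirling1 (n + 1) 0 = 0 from rfl]
      ring
    | succ t =>
      rw [coeff_add, coeff_mul_X, coeff_mul_C, ih t, ih (t + 1)]
      rw [show stirling1 (n + 1 + 1) (t + 1 + 1)
          = (n+1) * stirling1 (n+1) (t + 1 + 1) + stirling1 (n+1) (t+1) from rfl]
      ring

lemma stirling_poly (a : ℕ) (ha : 0 < a) (t : ℕ) :
    (∏ l ∈ Finset.Icc 1 (a - 1), (X + C (l : ℕ))).coeff t = stirling1 a (t + 1) := by
  have := stirling_poly' (a - 1) t
  rwa [Nat.sub_add_cancel ha] at this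

lemma nat_aux1 (c q : ℕ) (h : q ≤ c) : c - (c - q) = q := by omega

lemma nat_aux2 (a y : ℕ) (ha : 0 < a) (hy : y ≤ a - 1) : a - (a - 1 - y) = y + 1 := by omega

lemma coeff_prod_fin {R : Type*} [CommSemiring R] :
    ∀ (n : ℕ) (g : Fin n → R[X]) (q : ℕ),
      (∏ i, g i).coeff q
        = ∑ x ∈ Finset.Nat.antidiagonalTuple n q, ∏ i, (g i).coeff (x i)
  | 0, g, 0 => by simp
  | 0, g, q + 1 => by simp [Finset.Nat.antidiagonalTuple_zero_succ, Polynomial.coeff_one]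
  | n + 1, g, q => by
    rw [Fin.prod_univ_succ, Polynomial.coeff_mul]
    have : ∀ p : ℕ × ℕ, (∏ i : Fin n, g i.succ).coeff p.2
        = ∑ x ∈ Finset.Nat.antidiagonalTuple n p.2, ∏ i, (g i.succ).coeff (x i) :=
      fun p => coeff_prod_fin n (fun i => g i.succ) p.2
    simp_rw [this, Finset.mul_sum]
    rw [Finset.sum_sigma']
    refine Finset.sum_bij' (fun a _ => Fin.cons a.1.1 a.2)
      (fun y _ => ⟨(y 0, ∑ i : Fin n, y i.succ), fun i => y i.succ⟩) ?_ ?_ ?_ ?_ ?_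
    · rintro ⟨⟨p1, p2⟩, x⟩ ha
      dsimp only at ha ⊢
      simp only [Finset.mem_sigma, Finset.HasAntidiagonal.mem_antidiagonal, Finset.Nat.mem_antidiagonalTuple] at ha
      rw [Finset.Nat.mem_antidiagonalTuple, Fin.sum_univ_succ, Fin.cons_zero]
      simp only [Fin.cons_succ]
      rw [ha.2, ha.1]
    · intro y hy
      rw [Finset.Nat.mem_antidiagonalTuple] at hy
      rw [Finset.mem_sigma, Finset.HasAntidiagonal.mem_antidiagonal, Finset.Nat.mem_antidiagonalTuple]
      constructor
      · rw [← hy, Fin.sum_univ_succ]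
      · rfl
    · rintro ⟨⟨p1, p2⟩, x⟩ ha
      dsimp only at ha ⊢
      simp only [Finset.mem_sigma, Finset.HasAntidiagonal.mem_antidiagonal, Finset.Nat.mem_antidiagonalTuple] at ha
      simp only [Fin.cons_zero, Fin.cons_succ]
      have : ∑ i : Fin n, x i = p2 := ha.2
      subst this
      rfl
    · intro y hy
      exact Fin.cons_self_tail y
    · rintro ⟨⟨p1, p2⟩, x⟩ _ha
      dsimp only
      rw [Fin.prod_univ_succ, Fin.cons_zero]
      simp only [Fin.cons_succ]

/-- Abstract form of Theorem 3.3: the `q`-th elementary symmetric function of the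
multiset consisting of `a` with multiplicity `A`, `a+1` with multiplicity `B`, and
each of `1, …, a-1` with multiplicity `M`, as a sum over tuples of nonnegative
integers `(j, k, x₁, …, x_M)` with `j + k + x₁ + ⋯ + x_M = q` (encoded as
`f : Fin (M+2) → ℕ` with `f 0 = j`, `f 1 = k`, `f (i+2) = xᵢ`). -/
theorem esymm_three_block (a A B M q : ℕ) (ha : 0 < a) :
    (Multiset.replicate A a + Multiset.replicate B (a + 1)
        + (Finset.Icc 1 (a - 1)).val.bind (fun l => Multiset.replicate M l)).esymm q
      = ∑ f ∈ Finset.Nat.antidiagonalTuple (M + 2) q,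
          Nat.choose A (f 0) * a ^ (f 0) *
            (Nat.choose B (f 1) * (a + 1) ^ (f 1)) *
            ∏ i : Fin M, stirling1 a (a - f i.succ.succ) := by
  set S : Multiset ℕ := Multiset.replicate A a + Multiset.replicate B (a + 1)
      + (Finset.Icc 1 (a - 1)).val.bind (fun l => Multiset.replicate M l) with hS
  set c : ℕ := A + B + M * (a - 1) with hc
  set D : Fin (M + 2) → ℕ := Fin.cons A (Fin.cons B fun _ => a - 1) with hD
  set P : ℕ[X] := ∏ l ∈ Finset.Icc 1 (a - 1), (X + C (l : ℕ)) with hP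
  set g : Fin (M + 2) → ℕ[X] :=
    Fin.cons ((X + C (a : ℕ)) ^ A) (Fin.cons ((X + C ((a : ℕ) + 1)) ^ B) fun _ => P) with hg
  set F : (Fin (M + 2) → ℕ) → ℕ := fun f =>
    Nat.choose A (f 0) * a ^ (f 0) * (Nat.choose B (f 1) * (a + 1) ^ (f 1)) *
      ∏ i : Fin M, stirling1 a (a - f i.succ.succ) with hF
  have hcard : Multiset.card S = c := by
    rw [hS, hc]
    simp only [Multiset.card_add, Multiset.card_replicate, Multiset.card_bind,
      Function.comp_def]
    rw [Multiset.map_const', Multiset.sum_replicate, smul_eq_mul]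
    have : (Finset.Icc 1 (a - 1)).val.card = a - 1 := by
      rw [← Finset.card_def, Nat.card_Icc]
      omega
    rw [this]
    ring
  have hDsum : ∑ i, D i = c := by
    rw [hD, hc, Fin.sum_univ_succ, Fin.sum_univ_succ]
    simp only [Fin.cons_zero, Fin.cons_succ, Finset.sum_const, Finset.card_univ,
      Fintype.card_fin, smul_eq_mul]
    ring
  have hg0 : ∀ t, (g 0).coeff t = a ^ (A - t) * A.choose t := by
    intro t
    rw [hg, Fin.cons_zero, Polynomial.coeff_X_add_C_pow, Nat.cast_id]
  have hg1 : ∀ t, (g 1).coeff t = (a + 1) ^ (B - t) * B.choose t := by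
    intro t
    rw [hg, show (1 : Fin (M + 2)) = Fin.succ 0 from rfl, Fin.cons_succ, Fin.cons_zero,
      Polynomial.coeff_X_add_C_pow, Nat.cast_id]
  have hg2 : ∀ (j : Fin M) (t : ℕ), (g j.succ.succ).coeff t = stirling1 a (t + 1) := by
    intro j t
    rw [hg, Fin.cons_succ, Fin.cons_succ]
    exact stirling_poly a ha t
  -- reduce RHS to the filtered sum
  have hRHS : ∀ m : ℕ, ∑ f ∈ Finset.Nat.antidiagonalTuple (M + 2) m, F f
      = ∑ f ∈ (Finset.Nat.antidiagonalTuple (M + 2) m).filter (fun f => ∀ i, f i ≤ D i),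
          F f := by
    intro m
    refine (Finset.sum_filter_of_ne ?_).symm
    intro f _ hne i
    by_contra hgt
    push_neg at hgt
    apply hne
    simp only [hF]
    induction i using Fin.cases with
    | zero =>
      have hgt' : A < f 0 := hgt
      rw [Nat.choose_eq_zero_of_lt hgt']
      ring
    | succ j =>
      induction j using Fin.cases with
      | zero =>
        have hgt' : B < f 1 := hgt
        rw [Nat.choose_eq_zero_of_lt hgt']
        ring
      | succ j' =>
        have hgt' : a - 1 < f j'.succ.succ := hgt
        have hz : stirling1 a (a - f j'.succ.succ) = 0 := by
          rw [show a - f j'.succ.succ = 0 by omega]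
          exact stirling1_zero_right_s16 ha
        rw [Finset.prod_eq_zero (Finset.mem_univ j') hz]
        ring
  by_cases hq : q ≤ c
  · -- main case
    have hk : c - q ≤ Multiset.card S := by rw [hcard]; omega
    have hesymm := Multiset.prod_X_add_C_coeff S hk
    rw [hcard, show c - (c - q) = q by omega] at hesymm
    rw [← hesymm]
    have hprod : (S.map fun r => X + C (r : ℕ)).prod = ∏ i, g i := by
      rw [hS]
      simp only [Multiset.map_add, Multiset.prod_add, Multiset.map_replicate,
        Multiset.prod_replicate, Multiset.map_bind, Multiset.prod_bind]
      have h2 : ((Finset.Icc 1 (a - 1)).val.map fun l => (X + C (l : ℕ)) ^ M).prod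
          = ∏ l ∈ Finset.Icc 1 (a - 1), (X + C (l : ℕ)) ^ M := rfl
      rw [h2, Finset.prod_pow, ← hP]
      rw [hg, Fin.prod_univ_succ, Fin.prod_univ_succ]
      simp only [Fin.cons_zero, Fin.cons_succ, Finset.prod_const, Finset.card_univ,
        Fintype.card_fin]
      ring
    rw [hprod, coeff_prod_fin]
    rw [hRHS q]
    have hLHS : ∑ x ∈ Finset.Nat.antidiagonalTuple (M + 2) (c - q), ∏ i, (g i).coeff (x i)
        = ∑ x ∈ (Finset.Nat.antidiagonalTuple (M + 2) (c - q)).filter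
            (fun x => ∀ i, x i ≤ D i), ∏ i, (g i).coeff (x i) := by
      refine (Finset.sum_filter_of_ne ?_).symm
      intro x _ hne i
      by_contra hgt
      push_neg at hgt
      apply hne
      induction i using Fin.cases with
      | zero =>
        refine Finset.prod_eq_zero (Finset.mem_univ 0) ?_
        rw [hg0]
        have hgt' : A < x 0 := hgt
        rw [Nat.choose_eq_zero_of_lt hgt', mul_zero]
      | succ j =>
        induction j using Fin.cases with
        | zero =>
          refine Finset.prod_eq_zero (Finset.mem_univ (Fin.succ 0)) ?_
          have h1 : (Fin.succ 0 : Fin (M + 2)) = 1 := rfl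
          rw [h1, hg1]
          have hgt' : B < x 1 := hgt
          rw [Nat.choose_eq_zero_of_lt hgt', mul_zero]
        | succ j' =>
          refine Finset.prod_eq_zero (Finset.mem_univ j'.succ.succ) ?_
          rw [hg2]
          have hgt' : a - 1 < x j'.succ.succ := hgt
          exact stirling1_eq_zero_of_lt (by omega)
    rw [hLHS]
    refine Finset.sum_bij' (fun x _ => fun i => D i - x i) (fun f _ => fun i => D i - f i)
      ?_ ?_ ?_ ?_ ?_
    · intro x hx
      rw [Finset.mem_filter, Finset.Nat.mem_antidiagonalTuple] at hx
      rw [Finset.mem_filter, Finset.Nat.mem_antidiagonalTuple]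
      refine ⟨?_, fun i => Nat.sub_le _ _⟩
      show ∑ i, (D i - x i) = q
      rw [Finset.sum_tsub_distrib _ (fun i _ => hx.2 i), hx.1, hDsum]
      exact nat_aux1 c q hq
    · intro f hf
      rw [Finset.mem_filter, Finset.Nat.mem_antidiagonalTuple] at hf
      rw [Finset.mem_filter, Finset.Nat.mem_antidiagonalTuple]
      refine ⟨?_, fun i => Nat.sub_le _ _⟩
      show ∑ i, (D i - f i) = c - q
      rw [Finset.sum_tsub_distrib _ (fun i _ => hf.2 i), hf.1, hDsum]
    · intro x hx
      rw [Finset.mem_filter] at hx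
      funext i
      exact Nat.sub_sub_self (hx.2 i)
    · intro f hf
      rw [Finset.mem_filter] at hf
      funext i
      exact Nat.sub_sub_self (hf.2 i)
    · intro x hx
      rw [Finset.mem_filter] at hx
      have hle := hx.2
      have h0 : x 0 ≤ A := hle 0
      have h1 : x 1 ≤ B := hle 1
      simp only [hF]
      rw [show D 0 = A from rfl, show D 1 = B from rfl]
      simp only [show ∀ j : Fin M, D j.succ.succ = a - 1 from fun j => rfl]
      rw [Fin.prod_univ_succ, Fin.prod_univ_succ, hg0,
        show (Fin.succ 0 : Fin (M + 2)) = 1 from rfl, hg1]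
      rw [Nat.choose_symm h0, Nat.choose_symm h1]
      have e2 : ∀ j ∈ (Finset.univ : Finset (Fin M)),
          stirling1 a (a - (a - 1 - x j.succ.succ)) = stirling1 a (x j.succ.succ + 1) := by
        intro j _
        congr 1
        have hj : x j.succ.succ ≤ a - 1 := hle j.succ.succ
        exact nat_aux2 a _ ha hj
      rw [Finset.prod_congr rfl e2]
      have e3 : ∀ j ∈ (Finset.univ : Finset (Fin M)),
          (g j.succ.succ).coeff (x j.succ.succ) = stirling1 a (x j.succ.succ + 1) :=
        fun j _ => hg2 j _
      rw [Finset.prod_congr rfl e3]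
      ring
  · -- q > c : both sides zero
    have hzero : S.esymm q = 0 := by
      rw [Multiset.esymm, Multiset.powersetCard_eq_empty q (by rw [hcard]; omega)]
      simp
    rw [hzero, hRHS q]
    rw [Finset.filter_false_of_mem, Finset.sum_empty]
    intro f hfm hall
    rw [Finset.Nat.mem_antidiagonalTuple] at hfm
    have : ∑ i, f i ≤ ∑ i, D i := Finset.sum_le_sum fun i _ => hall i
    rw [hfm, hDsum] at this
    omega
end
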